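/- arXiv:1301.3669 — 6 statements merged into one kernel-verified Lean document; each statement's English description precedes it below -/
import Mathlib

section
/- For every positive integer n, β(n) − α(n) = n^{n+1}, where α(n) = Σ_{k=0}^{n} C(n,k) k^k (n−k)^{n−k} and β(n) = Σ_{k₁+k₂+k₃=n} (n!/(k₁!k₂!k₃!)) k₁^{k₁} k₂^{k₂} k₃^{k₃}, with the convention 0^0 = 1. -/
open Finset Nat Polynomial

lemma findiff : ∀ (m n : ℕ) (z : ℤ), m < n →
    ∑ j ∈ range (n+1), (-1:ℤ)^j * (n.choose j : ℤ) * (z + j)^m = 0 := by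
  intro m
  induction m using Nat.strong_induction_on with
  | _ m ih =>
    intro n z hmn
    obtain ⟨n', rfl⟩ : ∃ n', n = n' + 1 := ⟨n - 1, by omega⟩
    set A := ∑ j ∈ range (n'+1), (-1:ℤ)^j * (n'.choose j : ℤ) * (z + j)^m with hA
    set A1 := ∑ j ∈ range (n'+1), (-1:ℤ)^j * (n'.choose j : ℤ) * (z + 1 + j)^m with hA1
    set A2 := ∑ j ∈ range (n'+1), (-1:ℤ)^j * (n'.choose (j+1) : ℤ) * (z + 1 + j)^m with hA2d
    have hA2 : A2 = z^m - A := by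
      have b1 : A = ∑ j ∈ range (n'+2), (-1:ℤ)^j * (n'.choose j : ℤ) * (z + j)^m := by
        rw [Finset.sum_range_succ, Nat.choose_succ_self]; simp; exact hA
      have b2 : ∑ j ∈ range (n'+2), (-1:ℤ)^j * (n'.choose j : ℤ) * (z + j)^m
          = (∑ j ∈ range (n'+1), (-1:ℤ)^(j+1) * (n'.choose (j+1) : ℤ) * (z + (j+1:ℕ))^m)
            + (-1:ℤ)^0 * (n'.choose 0 : ℤ) * (z + (0:ℕ))^m :=
        Finset.sum_range_succ' _ _
      have b3 : ∑ j ∈ range (n'+1), (-1:ℤ)^(j+1) * (n'.choose (j+1) : ℤ) * (z + (j+1:ℕ))^m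
          = -A2 := by
        rw [hA2d, ← Finset.sum_neg_distrib]
        refine Finset.sum_congr rfl fun j _ => ?_
        push_cast; ring
      rw [b2, b3] at b1
      simp at b1
      linarith
    have key : ∑ j ∈ range (n'+2), (-1:ℤ)^j * ((n'+1).choose j : ℤ) * (z + j)^m = A - A1 := by
      have c2 : ∑ j ∈ range (n'+2), (-1:ℤ)^j * ((n'+1).choose j : ℤ) * (z + j)^m
          = (∑ j ∈ range (n'+1), (-1:ℤ)^(j+1) * ((n'+1).choose (j+1) : ℤ) * (z + (j+1:ℕ))^m)
            + (-1:ℤ)^0 * ((n'+1).choose 0 : ℤ) * (z + (0:ℕ))^m :=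
        Finset.sum_range_succ' _ _
      have c3 : ∑ j ∈ range (n'+1), (-1:ℤ)^(j+1) * ((n'+1).choose (j+1) : ℤ) * (z + (j+1:ℕ))^m
          = -A1 - A2 := by
        have : ∀ j ∈ range (n'+1), (-1:ℤ)^(j+1) * ((n'+1).choose (j+1) : ℤ) * (z + (j+1:ℕ))^m
            = -((-1:ℤ)^j * (n'.choose j : ℤ) * (z + 1 + j)^m)
              - (-1:ℤ)^j * (n'.choose (j+1) : ℤ) * (z + 1 + j)^m := by
          intro j _
          rw [Nat.choose_succ_succ]
          push_cast; ring
        rw [Finset.sum_congr rfl this, Finset.sum_sub_distrib, Finset.sum_neg_distrib]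
      rw [c2, c3, hA2]
      simp
      ring
    rw [key, hA1, hA, ← Finset.sum_sub_distrib]
    have expand : ∀ j ∈ range (n'+1), ((-1:ℤ)^j * (n'.choose j : ℤ) * (z + j)^m
          - (-1:ℤ)^j * (n'.choose j : ℤ) * (z + 1 + j)^m)
        = ∑ t ∈ range m, -((m.choose t : ℤ) * ((-1:ℤ)^j * (n'.choose j : ℤ) * (z + j)^t)) := by
      intro j _
      have hpow : (z + 1 + (j:ℤ))^m = ∑ t ∈ range (m+1), (z+j)^t * (m.choose t : ℤ) := by
        rw [show (z + 1 + (j:ℤ)) = (z + j) + 1 by ring, add_pow]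
        simp
      have hs : ∑ t ∈ range m, -((m.choose t : ℤ) * ((-1:ℤ)^j * (n'.choose j : ℤ) * (z + j)^t))
          = -((-1:ℤ)^j * (n'.choose j : ℤ) * ∑ t ∈ range m, (z+j)^t * (m.choose t : ℤ)) := by
        rw [Finset.mul_sum, ← Finset.sum_neg_distrib]
        exact Finset.sum_congr rfl fun t _ => by ring
      rw [hs, hpow, Finset.sum_range_succ, Nat.choose_self]
      push_cast; ring
    rw [Finset.sum_congr rfl expand, Finset.sum_comm]
    refine Finset.sum_eq_zero fun t ht => ?_
    have ht' := Finset.mem_range.mp ht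
    have ihz := ih t ht' n' z (by omega)
    calc ∑ j ∈ range (n'+1), -((m.choose t : ℤ) * ((-1:ℤ)^j * (n'.choose j : ℤ) * (z + j)^t))
        = -((m.choose t : ℤ) * ∑ j ∈ range (n'+1), (-1:ℤ)^j * (n'.choose j : ℤ) * (z + j)^t) := by
          rw [Finset.mul_sum, ← Finset.sum_neg_distrib]
      _ = 0 := by rw [ihz]; ring



noncomputable def Pa (n x c : ℕ) : Polynomial ℤ :=
  (X + C ((c:ℤ) + n))^n +
  ∑ i ∈ range n, (C (n.choose (i+1) : ℤ) * C (x : ℤ) * C ((x:ℤ) + i + 1)^i)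
      * (X + C ((c:ℤ) + (n-1-i : ℕ)))^(n-1-i)

lemma pa_eval_anchor (n x c : ℕ) (hn : 0 < n) :
    (Pa n x c).eval (-((c:ℤ) + x + n)) = 0 := by
  have hF := findiff (n-1) n (x:ℤ) (by omega)
  rw [Pa]
  simp only [eval_add, eval_pow, eval_finset_sum, eval_mul, eval_X, eval_C]
  have h1 : ((-((c:ℤ) + x + n)) + ((c:ℤ) + n))^n = (-1:ℤ)^n * (x:ℤ)^n := by
    rw [show (-((c:ℤ) + x + n)) + ((c:ℤ) + n) = -(x:ℤ) by ring, neg_pow]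
  have h2 : ∀ i ∈ range n,
      ((n.choose (i+1) : ℤ) * (x:ℤ) * ((x:ℤ) + i + 1)^i)
        * ((-((c:ℤ) + x + n)) + ((c:ℤ) + (n-1-i : ℕ)))^(n-1-i)
      = (-1:ℤ)^n * ((-1:ℤ)^(i+1) * (n.choose (i+1) : ℤ) * ((x:ℤ) + (i+1))^(n-1)) * x := by
    intro i hi
    have hi' := Finset.mem_range.mp hi
    have hc : ((n-1-i : ℕ) : ℤ) = (n:ℤ) - 1 - i := by
      have : n - 1 - i = n - (1+i) := by omega
      rw [this]
      push_cast [Nat.cast_sub (by omega : 1 + i ≤ n)]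
      ring
    have hbase : (-((c:ℤ) + x + n)) + ((c:ℤ) + (n-1-i : ℕ)) = -((x:ℤ) + i + 1) := by
      rw [hc]; ring
    rw [hbase, neg_pow]
    have hsign : (-1:ℤ)^(n-1-i) = (-1:ℤ)^n * (-1:ℤ)^(i+1) := by
      have h := pow_add (-1:ℤ) (n-1-i) (i+1)
      have : n - 1 - i + (i+1) = n := by omega
      rw [this] at h
      have h2 : ((-1:ℤ)^(i+1)) * ((-1:ℤ)^(i+1)) = 1 := by
        rw [← pow_add, ← two_mul]
        exact Even.neg_one_pow ⟨i+1, by ring⟩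
      calc (-1:ℤ)^(n-1-i) = (-1:ℤ)^(n-1-i) * (((-1:ℤ)^(i+1)) * ((-1:ℤ)^(i+1))) := by rw [h2, mul_one]
        _ = (-1:ℤ)^n * (-1:ℤ)^(i+1) := by rw [← mul_assoc, ← pow_add, this]
    have hpow : ((x:ℤ) + i + 1)^i * ((x:ℤ) + i + 1)^(n-1-i) = ((x:ℤ) + i + 1)^(n-1) := by
      rw [← pow_add]; congr 1; omega
    calc ((n.choose (i+1) : ℤ) * (x:ℤ) * ((x:ℤ) + i + 1)^i)
          * ((-1:ℤ)^(n-1-i) * ((x:ℤ) + i + 1)^(n-1-i))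
        = (-1:ℤ)^(n-1-i) * (n.choose (i+1) : ℤ) * (((x:ℤ) + i + 1)^i * ((x:ℤ) + i + 1)^(n-1-i)) * x := by ring
      _ = (-1:ℤ)^n * ((-1:ℤ)^(i+1) * (n.choose (i+1) : ℤ) * ((x:ℤ) + (i+1))^(n-1)) * x := by
          rw [hsign, hpow]; push_cast; ring
  rw [h1, Finset.sum_congr rfl h2]
  have hshift : ∑ i ∈ range n, (-1:ℤ)^n * ((-1:ℤ)^(i+1) * (n.choose (i+1) : ℤ) * ((x:ℤ) + (i+1))^(n-1)) * x
      = (-1:ℤ)^n * x * ∑ i ∈ range n, (-1:ℤ)^(i+1) * (n.choose (i+1) : ℤ) * ((x:ℤ) + (i+1:ℕ))^(n-1) := by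
    rw [Finset.mul_sum]
    refine Finset.sum_congr rfl fun i _ => ?_
    push_cast; ring
  rw [hshift]
  have hsplit : ∑ j ∈ range (n+1), (-1:ℤ)^j * (n.choose j : ℤ) * ((x:ℤ) + j)^(n-1)
      = (∑ i ∈ range n, (-1:ℤ)^(i+1) * (n.choose (i+1) : ℤ) * ((x:ℤ) + (i+1:ℕ))^(n-1))
        + (x:ℤ)^(n-1) := by
    rw [Finset.sum_range_succ' (fun j => (-1:ℤ)^j * (n.choose j : ℤ) * ((x:ℤ) + j)^(n-1)) n]
    simp
  rw [hF] at hsplit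
  have : ∑ i ∈ range n, (-1:ℤ)^(i+1) * (n.choose (i+1) : ℤ) * ((x:ℤ) + (i+1:ℕ))^(n-1) = -(x:ℤ)^(n-1) := by
    linarith
  rw [this]
  have hxn : (x:ℤ)^n = (x:ℤ)^(n-1) * x := by
    rw [← pow_succ]; congr 1; omega
  rw [hxn]; ring

lemma pa_derivative (m x c : ℕ) :
    derivative (Pa (m+1) x c) = C ((m:ℤ)+1) * Pa m x (c+1) := by
  rw [Pa, Pa]
  rw [derivative_add, derivative_sum, derivative_X_add_C_pow]
  rw [mul_add, Finset.mul_sum]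
  congr 1
  · have h1 : ((m+1 : ℕ) : ℤ) = (m:ℤ)+1 := by push_cast; ring
    have h2 : (c:ℤ) + ((m+1:ℕ):ℤ) = ((c+1:ℕ):ℤ) + (m:ℤ) := by push_cast; ring
    rw [show (m+1)-1 = m from rfl, h2, h1]
  · rw [Finset.sum_range_succ]
    have hlast : derivative ((C ((m+1).choose (m+1) : ℤ) * C (x : ℤ) * C ((x:ℤ) + m + 1)^m)
        * (X + C ((c:ℤ) + ((m+1-1-m : ℕ) : ℤ)))^(m+1-1-m)) = 0 := by
      rw [show m+1-1-m = 0 from by omega, pow_zero, mul_one, ← C_pow, ← C_mul, ← C_mul,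
        derivative_C]
    rw [hlast, add_zero]
    refine Finset.sum_congr rfl fun i hi => ?_
    have hi' := Finset.mem_range.mp hi
    rw [derivative_mul, derivative_X_add_C_pow]
    have hcder : derivative (C ((m+1).choose (i+1) : ℤ) * C (x : ℤ) * C ((x:ℤ) + i + 1)^i) = 0 := by
      rw [← C_pow, ← C_mul, ← C_mul, derivative_C]
    rw [hcder, zero_mul, zero_add]
    rw [show m+1-1-i = m-i from by omega]
    have hbase : (c:ℤ) + ((m-i : ℕ) : ℤ) = ((c+1:ℕ):ℤ) + ((m-1-i : ℕ) : ℤ) := by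
      have : c + (m-i) = (c+1) + (m-1-i) := by omega
      exact_mod_cast this
    have hexp : m-i-1 = m-1-i := by omega
    have hcoef : ((m+1).choose (i+1) : ℤ) * ((m-i : ℕ) : ℤ) = ((m:ℤ)+1) * (m.choose (i+1) : ℤ) := by
      have h' : (m+1).choose (i+1) * (m-i) = (m+1) * m.choose (i+1) := by
        have h := Nat.choose_mul_succ_eq m (i+1)
        rw [show m+1-(i+1) = m-i from by omega] at h
        rw [← h]; ring
      exact_mod_cast h'
    rw [hbase, hexp]
    calc (C ((m+1).choose (i+1) : ℤ) * C (x : ℤ) * C ((x:ℤ) + i + 1)^i) *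
          (C ((m-i : ℕ) : ℤ) * (X + C (((c+1:ℕ):ℤ) + ((m-1-i : ℕ) : ℤ)))^(m-1-i)) =
        C (((m+1).choose (i+1) : ℤ) * ((m-i : ℕ) : ℤ)) * (C (x : ℤ) * C ((x:ℤ) + i + 1)^i *
          (X + C (((c+1:ℕ):ℤ) + ((m-1-i : ℕ) : ℤ)))^(m-1-i)) := by
          rw [C_mul]; ring
      _ = C ((m:ℤ)+1) * (C (m.choose (i+1) : ℤ) * C (x : ℤ) * C ((x:ℤ) + i + 1)^i *
          (X + C (((c+1:ℕ):ℤ) + ((m-1-i : ℕ) : ℤ)))^(m-1-i)) := by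
          rw [hcoef, C_mul]; ring

lemma polyAbel : ∀ (n x c : ℕ), Pa n x c = (X + C ((c:ℤ) + x + n))^n := by
  intro n
  induction n with
  | zero => intro x c; simp [Pa]
  | succ m ih =>
    intro x c
    have hd : derivative (Pa (m+1) x c - (X + C ((c:ℤ) + x + (m+1:ℕ)))^(m+1)) = 0 := by
      rw [derivative_sub, pa_derivative, ih x (c+1), derivative_X_add_C_pow]
      rw [show (m+1)-1 = m from rfl]
      have : ((c:ℤ) + x + ((m+1:ℕ):ℤ)) = (((c+1:ℕ)):ℤ) + x + m := by push_cast; ring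
      rw [this]
      push_cast
      ring
    have ha := Polynomial.eq_C_of_derivative_eq_zero hd
    have heval := congrArg (Polynomial.eval (-((c:ℤ) + x + (m+1:ℕ)))) ha
    rw [eval_sub, pa_eval_anchor (m+1) x c (by omega)] at heval
    simp only [eval_pow, eval_add, eval_X, eval_C, eval_sub] at heval
    rw [neg_add_cancel, zero_pow (by omega : m+1 ≠ 0)] at heval
    have hc0 : (Pa (m+1) x c - (X + C ((c:ℤ) + x + (m+1:ℕ)))^(m+1)).coeff 0 = 0 := by
      linarith [heval]
    rw [hc0, map_zero] at ha
    exact sub_eq_zero.mp ha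

lemma Bnat (n x : ℕ) :
    n^n + ∑ i ∈ range n, n.choose (i+1) * x * (x+i+1)^i * (n-1-i)^(n-1-i) = (x+n)^n := by
  have h := congrArg (Polynomial.eval (0:ℤ)) (polyAbel n x 0)
  rw [Pa] at h
  simp only [eval_add, eval_pow, eval_finset_sum, eval_mul, eval_X, eval_C,
    Nat.cast_zero, zero_add] at h
  exact_mod_cast h

def Ls (m y : ℕ) : ℕ := ∑ k ∈ range (m+1), m.choose k * k^k * (y + (m-k))^(m-k)
def Rs (m y : ℕ) : ℕ := ∑ k ∈ range (m+1), m.descFactorial k * (y+m)^(m-k)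

lemma Rrec (m y : ℕ) : Rs (m+1) y = (y+(m+1))^(m+1) + (m+1) * Rs m (y+1) := by
  rw [Rs, Rs, Finset.sum_range_succ' (fun k => (m+1).descFactorial k * (y+(m+1))^(m+1-k)) (m+1)]
  rw [Nat.descFactorial_zero, one_mul, Nat.sub_zero, Finset.mul_sum, add_comm]
  congr 1
  refine Finset.sum_congr rfl fun k hk => ?_
  rw [Nat.succ_descFactorial_succ, show m+1-(k+1) = m-k from by omega,
    show y+(m+1) = y+1+m from by omega]
  ring

lemma Lrec (m y : ℕ) : Ls (m+1) y = (y+(m+1))^(m+1) + (m+1) * Ls m (y+1) := by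
  have hdagger : y * (∑ k ∈ range m,
        (m+1).choose (k+1) * (k+1)^(k+1) * (y+1+(m-1-k))^(m-1-k)) + (m+1)^(m+1)
      = (m+1) * (y+1+m)^m := by
    set T := ∑ k ∈ range m, (m+1).choose (k+1) * (k+1)^(k+1) * (y+1+(m-1-k))^(m-1-k) with hT
    have hB := Bnat (m+1) y
    have hU : ∑ i ∈ range (m+1), (m+1).choose (i+1) * y * (y+i+1)^i * (m+1-1-i)^(m+1-1-i)
        = y * T + y * (y+1+m)^m := by
      have hrefl := Finset.sum_range_reflect
        (fun i => (m+1).choose (i+1) * y * (y+i+1)^i * (m+1-1-i)^(m+1-1-i)) (m+1)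
      rw [← hrefl]
      have hterm : ∀ j ∈ range (m+1),
          (m+1).choose ((m+1-1-j)+1) * y * (y+(m+1-1-j)+1)^(m+1-1-j)
            * (m+1-1-(m+1-1-j))^(m+1-1-(m+1-1-j))
          = (m+1).choose j * y * j^j * (y+1+(m-j))^(m-j) := by
        intro j hj
        have hj' := Finset.mem_range.mp hj
        rw [show m+1-1-j = m-j from by omega, show m+1-1-(m-j) = j from by omega,
          show (m-j)+1 = (m+1)-j from by omega, Nat.choose_symm (by omega : j ≤ m+1),
          show y+(m-j)+1 = y+1+(m-j) from by omega]
        ring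
      rw [Finset.sum_congr rfl hterm]
      rw [Finset.sum_range_succ' (fun j => (m+1).choose j * y * j^j * (y+1+(m-j))^(m-j)) m]
      rw [Nat.choose_zero_right, one_mul, Nat.sub_zero, pow_zero, mul_one]
      rw [Finset.mul_sum]
      congr 1
      refine Finset.sum_congr rfl fun k hk => ?_
      rw [show m-(k+1) = m-1-k from by omega]
      ring
    rw [hU] at hB
    have hpow : (y+(m+1))^(m+1) = y * (y+1+m)^m + (m+1) * (y+1+m)^m := by
      rw [show y+(m+1) = y+1+m from by omega, pow_succ]
      ring
    rw [hpow] at hB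
    omega
  rw [Ls, Ls]
  rw [Finset.sum_range_succ' (fun k => (m+1).choose k * k^k * (y+(m+1-k))^(m+1-k)) (m+1)]
  rw [Nat.choose_zero_right, one_mul, Nat.sub_zero, pow_zero, one_mul, add_comm]
  congr 1
  -- goal: ∑_{k∈range(m+1)} (m+1).choose (k+1) * (k+1)^(k+1) * (y+(m+1-(k+1)))^(m+1-(k+1))
  --     = (m+1) * ∑_{k∈range(m+1)} m.choose k * k^k * (y+1+(m-k))^(m-k)
  rw [Finset.sum_range_succ
    (fun k => (m+1).choose (k+1) * (k+1)^(k+1) * (y+(m+1-(k+1)))^(m+1-(k+1))) m]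
  rw [Finset.mul_sum,
    Finset.sum_range_succ' (fun k => (m+1) * (m.choose k * k^k * (y+1+(m-k))^(m-k))) m]
  have hlastL : (m+1).choose (m+1) * (m+1)^(m+1) * (y+(m+1-(m+1)))^(m+1-(m+1)) = (m+1)^(m+1) := by
    simp
  have hfirstR : (m+1) * (m.choose 0 * 0^0 * (y+1+(m-0))^(m-0)) = (m+1) * (y+1+m)^m := by
    simp
  rw [hlastL, hfirstR]
  have hterm2 : ∀ k ∈ range m,
      (m+1).choose (k+1) * (k+1)^(k+1) * (y+(m+1-(k+1)))^(m+1-(k+1))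
      = (m+1) * (m.choose (k+1) * (k+1)^(k+1) * (y+1+(m-(k+1)))^(m-(k+1)))
        + y * ((m+1).choose (k+1) * (k+1)^(k+1) * (y+1+(m-1-k))^(m-1-k)) := by
    intro k hk
    have hk' := Finset.mem_range.mp hk
    rw [show m+1-(k+1) = m-k from by omega, show m-(k+1) = m-1-k from by omega]
    have hsplit : (y+(m-k))^(m-k) = (y+1+(m-1-k))^(m-1-k) * ((m-k) + y) := by
      rw [show y+(m-k) = y+1+(m-1-k) from by omega, show m-k = (m-1-k)+1 from by omega, pow_succ]
      congr 1
      omega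
    have hchoose : (m+1) * m.choose (k+1) = (m-k) * (m+1).choose (k+1) := by
      have h := Nat.choose_mul_succ_eq m (k+1)
      rw [show m+1-(k+1) = m-k from by omega] at h
      rw [mul_comm] at h
      rw [h, mul_comm]
    rw [hsplit]
    calc (m+1).choose (k+1) * (k+1)^(k+1) * ((y+1+(m-1-k))^(m-1-k) * ((m-k) + y))
        = ((m-k) * (m+1).choose (k+1)) * ((k+1)^(k+1) * (y+1+(m-1-k))^(m-1-k))
          + y * ((m+1).choose (k+1) * (k+1)^(k+1) * (y+1+(m-1-k))^(m-1-k)) := by ring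
      _ = ((m+1) * m.choose (k+1)) * ((k+1)^(k+1) * (y+1+(m-1-k))^(m-1-k))
          + y * ((m+1).choose (k+1) * (k+1)^(k+1) * (y+1+(m-1-k))^(m-1-k)) := by rw [hchoose]
      _ = (m+1) * (m.choose (k+1) * (k+1)^(k+1) * (y+1+(m-1-k))^(m-1-k))
          + y * ((m+1).choose (k+1) * (k+1)^(k+1) * (y+1+(m-1-k))^(m-1-k)) := by ring
  rw [Finset.sum_congr rfl hterm2, Finset.sum_add_distrib]
  have hg : (∑ k ∈ range m, (m+1) * (m.choose (k+1) * (k+1)^(k+1) * (y+1+(m-(k+1)))^(m-(k+1))))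
      = ∑ k ∈ range m, (m+1) * (m.choose (k+1) * (k+1)^(k+1) * (y+1+(m-1-k))^(m-1-k)) :=
    Finset.sum_congr rfl fun k hk => by rw [show m-(k+1) = m-1-k from by omega]
  rw [hg]
  have hyT : ∑ k ∈ range m, y * ((m+1).choose (k+1) * (k+1)^(k+1) * (y+1+(m-1-k))^(m-1-k))
      = y * (∑ k ∈ range m, (m+1).choose (k+1) * (k+1)^(k+1) * (y+1+(m-1-k))^(m-1-k)) :=
    (Finset.mul_sum _ _ _).symm
  rw [hyT, add_assoc, hdagger]

lemma LR : ∀ m y, Ls m y = Rs m y := by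
  intro m
  induction m with
  | zero => intro y; simp [Ls, Rs]
  | succ m ih => intro y; rw [Lrec, Rrec, ih]

-- extend a triangular inner sum to full range with ite
lemma ext1 (n : ℕ) (g : ℕ → ℕ) (i : ℕ) (hi : i ≤ n) :
    ∑ j ∈ range (n - i + 1), g j = ∑ j ∈ range (n+1), if i + j ≤ n then g j else 0 := by
  rw [← Finset.sum_subset (Finset.range_subset_range.mpr (by omega : n - i + 1 ≤ n + 1))
    (fun j hj hj' => by
      rw [Finset.mem_range] at hj hj'
      rw [if_neg (by omega)])]
  refine Finset.sum_congr rfl fun j hj => ?_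
  rw [Finset.mem_range] at hj
  rw [if_pos (by omega)]

lemma tri_swap (n : ℕ) (f : ℕ → ℕ → ℕ) :
    ∑ i ∈ range (n+1), ∑ j ∈ range (n - i + 1), f i j
    = ∑ j ∈ range (n+1), ∑ i ∈ range (n - j + 1), f i j := by
  have h1 : ∑ i ∈ range (n+1), ∑ j ∈ range (n - i + 1), f i j
      = ∑ i ∈ range (n+1), ∑ j ∈ range (n+1), if i + j ≤ n then f i j else 0 :=
    Finset.sum_congr rfl fun i hi => ext1 n (f i) i (by
      have := Finset.mem_range.mp hi; omega)
  have h2 : ∑ j ∈ range (n+1), ∑ i ∈ range (n - j + 1), f i j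
      = ∑ j ∈ range (n+1), ∑ i ∈ range (n+1), if j + i ≤ n then f i j else 0 :=
    Finset.sum_congr rfl fun j hj => ext1 n (fun i => f i j) j (by
      have := Finset.mem_range.mp hj; omega)
  rw [h1, h2, Finset.sum_comm]
  refine Finset.sum_congr rfl fun j _ => Finset.sum_congr rfl fun i _ => ?_
  rw [Nat.add_comm i j]

lemma tri_group (n : ℕ) (g : ℕ → ℕ) :
    ∑ k ∈ range (n+1), ∑ j ∈ range (n - k + 1), g (k + j)
    = ∑ m ∈ range (n+1), (m+1) * g m := by
  have h1 : ∑ k ∈ range (n+1), ∑ j ∈ range (n - k + 1), g (k + j)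
      = ∑ k ∈ range (n+1), ∑ m ∈ range (n+1), if k ≤ m then g m else 0 := by
    refine Finset.sum_congr rfl fun k hk => ?_
    have hk' := Finset.mem_range.mp hk
    have e1 : ∑ j ∈ range (n - k + 1), g (k + j)
        = ∑ j ∈ range (n+1), if k + j ≤ n then g (k+j) else 0 :=
      ext1 n (fun j => g (k+j)) k (by omega)
    have hsub : Ico k (n+1) ⊆ range (n+1) := by
      intro m hm
      rw [Finset.mem_Ico] at hm
      exact Finset.mem_range.mpr hm.2
    have hzero : ∀ m ∈ range (n+1), m ∉ Ico k (n+1) → (if k ≤ m then g m else 0) = 0 := by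
      intro m hm hm'
      rw [Finset.mem_range] at hm
      rw [Finset.mem_Ico] at hm'
      rw [if_neg (by omega)]
    have e2 : ∑ m ∈ Ico k (n+1), (if k ≤ m then g m else 0)
        = ∑ m ∈ range (n+1), (if k ≤ m then g m else 0) :=
      Finset.sum_subset hsub hzero
    rw [← e2, Finset.sum_Ico_eq_sum_range, show n + 1 - k = n - k + 1 from by omega]
    exact Finset.sum_congr rfl fun j hj => by rw [if_pos (by omega : k ≤ k + j)]
  rw [h1, Finset.sum_comm]
  refine Finset.sum_congr rfl fun m hm => ?_
  have hm' := Finset.mem_range.mp hm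
  have hsub : range (m+1) ⊆ range (n+1) := Finset.range_subset_range.mpr (by omega)
  have hzero : ∀ k ∈ range (n+1), k ∉ range (m+1) → (if k ≤ m then g m else 0) = 0 := by
    intro k hk hk'
    rw [Finset.mem_range] at hk hk'
    rw [if_neg (by omega)]
  have e3 : ∑ k ∈ range (m+1), (if k ≤ m then g m else 0)
      = ∑ k ∈ range (n+1), (if k ≤ m then g m else 0) :=
    Finset.sum_subset hsub hzero
  rw [← e3]
  have e4 : ∀ k ∈ range (m+1), (if k ≤ m then g m else 0) = g m := fun k hk => by
    rw [if_pos (by have := Finset.mem_range.mp hk; omega)]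
  rw [Finset.sum_congr rfl e4, Finset.sum_const, Finset.card_range, smul_eq_mul]

lemma dfp (n : ℕ) : ∀ (j k : ℕ), n.descFactorial (k + j) = n.descFactorial k * (n - k).descFactorial j := by
  intro j
  induction j with
  | zero => intro k; simp
  | succ j ih =>
    intro k
    rw [show k + (j+1) = (k+j) + 1 from by omega, Nat.descFactorial_succ, ih k,
      Nat.descFactorial_succ, show n - (k+j) = n - k - j from by omega]
    ring

lemma choose_prod (n a k : ℕ) (h : a + k ≤ n) :
    n.choose a * (n-a).choose k = n.choose k * (n-k).choose a := by
  have hM : 0 < a ! * k ! * (n - a - k)! :=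
    Nat.mul_pos (Nat.mul_pos (Nat.factorial_pos a) (Nat.factorial_pos k)) (Nat.factorial_pos _)
  apply Nat.eq_of_mul_eq_mul_right hM
  have h1 : n.choose a * a ! * (n-a)! = n ! := Nat.choose_mul_factorial_mul_factorial (by omega)
  have h2 : (n-a).choose k * k ! * (n-a-k)! = (n-a)! :=
    Nat.choose_mul_factorial_mul_factorial (by omega : k ≤ n - a)
  have h3 : n.choose k * k ! * (n-k)! = n ! := Nat.choose_mul_factorial_mul_factorial (by omega)
  have h4 : (n-k).choose a * a ! * (n-k-a)! = (n-k)! := Nat.choose_mul_factorial_mul_factorial (by omega : a ≤ n - k)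
  have h5 : n - k - a = n - a - k := by omega
  calc n.choose a * (n-a).choose k * (a ! * k ! * (n-a-k)!)
      = (n.choose a * a !) * ((n-a).choose k * k ! * (n-a-k)!) := by ring
    _ = (n.choose a * a !) * (n-a)! := by rw [h2]
    _ = n ! := by rw [← h1]
    _ = (n.choose k * k !) * (n-k)! := by rw [← h3]
    _ = (n.choose k * k !) * ((n-k).choose a * a ! * (n-k-a)!) := by rw [h4]
    _ = n.choose k * (n-k).choose a * (a ! * k ! * (n-a-k)!) := by rw [h5]; ring

lemma chsw (n a k : ℕ) (h : a + k ≤ n) :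
    n.choose a * (n-a).descFactorial k = n.descFactorial k * (n-k).choose a := by
  rw [Nat.descFactorial_eq_factorial_mul_choose, Nat.descFactorial_eq_factorial_mul_choose]
  calc n.choose a * (k ! * (n-a).choose k) = k ! * (n.choose a * (n-a).choose k) := by ring
    _ = k ! * (n.choose k * (n-k).choose a) := by rw [choose_prod n a k h]
    _ = k ! * n.choose k * (n-k).choose a := by ring

lemma multinom (n a b : ℕ) (ha : a ≤ n) (hb : b ≤ n - a) :
    n ! / (a ! * b ! * (n - a - b)!) = n.choose a * (n-a).choose b := by
  have h1 : n.choose a * a ! * (n-a)! = n ! := Nat.choose_mul_factorial_mul_factorial ha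
  have h2 : (n-a).choose b * b ! * (n-a-b)! = (n-a)! := Nat.choose_mul_factorial_mul_factorial hb
  have key : n ! = (n.choose a * (n-a).choose b) * (a ! * b ! * (n - a - b)!) := by
    rw [← h1, ← h2]; ring
  rw [key, Nat.mul_div_cancel]
  exact Nat.mul_pos (Nat.mul_pos (Nat.factorial_pos a) (Nat.factorial_pos b)) (Nat.factorial_pos _)

lemma tel (n : ℕ) : ∀ N, N ≤ n + 1 →
    ∑ m ∈ range N, m * (n.descFactorial m * n^(n-m)) + n.descFactorial N * n^(n+1-N)
    = n^(n+1) := by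
  intro N
  induction N with
  | zero => intro _; simp
  | succ N ih =>
    intro hN
    rw [Finset.sum_range_succ]
    have key : N * (n.descFactorial N * n^(n-N)) + n.descFactorial (N+1) * n^(n+1-(N+1))
        = n.descFactorial N * n^(n+1-N) := by
      rw [Nat.descFactorial_succ, show n+1-(N+1) = n-N from by omega,
        show n+1-N = (n-N)+1 from by omega, pow_succ]
      calc N * (n.descFactorial N * n^(n-N)) + (n-N) * n.descFactorial N * n^(n-N)
          = (N + (n-N)) * (n.descFactorial N * n^(n-N)) := by ring
        _ = n * (n.descFactorial N * n^(n-N)) := by rw [show N + (n-N) = n from by omega]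
        _ = n.descFactorial N * (n^(n-N) * n) := by ring
    rw [add_assoc, key]
    exact ih (by omega)

lemma telescope (n : ℕ) :
    ∑ m ∈ range (n+1), m * (n.descFactorial m * n^(n-m)) = n^(n+1) := by
  have h := tel n (n+1) le_rfl
  rw [Nat.descFactorial_eq_zero_iff_lt.mpr (by omega)] at h
  simpa using h


/-- The `n^n`-rescaled form of Lacasse's conjecture: `β(n) − α(n) = n^{n+1}`, where
`α(n) = Σ_{k=0}^{n} C(n,k) k^k (n−k)^{n−k}` and
`β(n) = Σ_{k₁+k₂+k₃=n} (n!/(k₁!k₂!k₃!)) k₁^{k₁} k₂^{k₂} k₃^{k₃}`,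
with the convention `0^0 = 1`. -/
theorem beta_sub_alpha (n : ℕ) (hn : 0 < n) :
    (∑ p ∈ Finset.HasAntidiagonal.antidiagonal n, ∑ q ∈ Finset.HasAntidiagonal.antidiagonal p.2,
      n ! / ((p.1)! * (q.1)! * (q.2)!) * p.1 ^ p.1 * q.1 ^ q.1 * q.2 ^ q.2)
    - (∑ k ∈ Finset.range (n + 1), n.choose k * k ^ k * (n - k) ^ (n - k))
    = n ^ (n + 1) := by
  have hα : (∑ k ∈ Finset.range (n + 1), n.choose k * k ^ k * (n - k) ^ (n - k))
      = ∑ m ∈ range (n+1), n.descFactorial m * n^(n-m) := by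
    have h1 : (∑ k ∈ Finset.range (n + 1), n.choose k * k ^ k * (n - k) ^ (n - k)) = Ls n 0 := by
      rw [Ls]
      exact Finset.sum_congr rfl fun k _ => by rw [zero_add]
    rw [h1, LR n 0, Rs]
    exact Finset.sum_congr rfl fun m _ => by rw [zero_add]
  have hβ : (∑ p ∈ Finset.HasAntidiagonal.antidiagonal n, ∑ q ∈ Finset.HasAntidiagonal.antidiagonal p.2,
      n ! / ((p.1)! * (q.1)! * (q.2)!) * p.1 ^ p.1 * q.1 ^ q.1 * q.2 ^ q.2)
      = n^(n+1) + ∑ m ∈ range (n+1), n.descFactorial m * n^(n-m) := by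
    rw [Finset.Nat.sum_antidiagonal_eq_sum_range_succ_mk]
    have stepA : ∀ a ∈ range (n+1),
        (∑ q ∈ Finset.HasAntidiagonal.antidiagonal (n - a),
          n ! / (a ! * (q.1)! * (q.2)!) * a ^ a * q.1 ^ q.1 * q.2 ^ q.2)
        = ∑ k ∈ range (n - a + 1),
            (n.choose a * (n-a).descFactorial k) * (a^a * (n-a)^(n-a-k)) := by
      intro a ha
      have ha' := Finset.mem_range.mp ha
      rw [Finset.Nat.sum_antidiagonal_eq_sum_range_succ_mk]
      have h2 : ∀ b ∈ range (n - a + 1),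
          n ! / (a ! * b ! * (n - a - b)!) * a ^ a * b ^ b * (n - a - b) ^ (n - a - b)
          = n.choose a * a^a * ((n-a).choose b * b^b * (0 + (n - a - b))^(n - a - b)) := by
        intro b hb
        have hb' := Finset.mem_range.mp hb
        rw [multinom n a b (by omega) (by omega), zero_add]
        ring
      rw [Finset.sum_congr rfl h2, ← Finset.mul_sum, ← Ls, LR, Rs, Finset.mul_sum]
      refine Finset.sum_congr rfl fun k hk => ?_
      rw [zero_add]
      ring
    rw [Finset.sum_congr rfl stepA]
    have stepB : ∀ a ∈ range (n+1), ∀ k ∈ range (n - a + 1),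
        (n.choose a * (n-a).descFactorial k) * (a^a * (n-a)^(n-a-k))
        = (n.descFactorial k * ((n-k).choose a)) * (a^a * (n-a)^(n-a-k)) := by
      intro a ha k hk
      rw [chsw n a k (by
        have h1 := Finset.mem_range.mp ha; have h2 := Finset.mem_range.mp hk; omega)]
    rw [Finset.sum_congr rfl (fun a ha => Finset.sum_congr rfl (stepB a ha))]
    rw [tri_swap n (fun a k => (n.descFactorial k * ((n-k).choose a)) * (a^a * (n-a)^(n-a-k)))]
    have stepC : ∀ k ∈ range (n+1),
        (∑ a ∈ range (n - k + 1), (n.descFactorial k * ((n-k).choose a)) * (a^a * (n-a)^(n-a-k)))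
        = ∑ j ∈ range (n - k + 1), n.descFactorial (k + j) * n^(n-(k+j)) := by
      intro k hk
      have hk' := Finset.mem_range.mp hk
      have h3 : ∀ a ∈ range (n - k + 1),
          (n.descFactorial k * ((n-k).choose a)) * (a^a * (n-a)^(n-a-k))
          = n.descFactorial k * ((n-k).choose a * a^a * (k + (n-k-a))^(n-k-a)) := by
        intro a ha
        have ha' := Finset.mem_range.mp ha
        rw [show k + (n-k-a) = n - a from by omega, show n-k-a = n-a-k from by omega]
        ring
      rw [Finset.sum_congr rfl h3, ← Finset.mul_sum, ← Ls, LR, Rs, Finset.mul_sum]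
      refine Finset.sum_congr rfl fun j hj => ?_
      have hj' := Finset.mem_range.mp hj
      rw [show k + (n-k) = n from by omega, dfp n j k, show n-k-j = n - (k+j) from by omega]
      ring
    rw [Finset.sum_congr rfl stepC]
    rw [tri_group n (fun m => n.descFactorial m * n^(n-m))]
    have stepD : ∀ m ∈ range (n+1), (m+1) * (n.descFactorial m * n^(n-m))
        = m * (n.descFactorial m * n^(n-m)) + n.descFactorial m * n^(n-m) := fun m _ => by ring
    rw [Finset.sum_congr rfl stepD, Finset.sum_add_distrib, telescope n]
  omega
end

section
/- For every positive integer n, Σ_{k=0}^{n} C(n,k) k^k (n−k)^{n−k} = Σ_{k=0}^{n} (n!/k!) n^k, with the convention 0^0 = 1. -/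
open Finset Nat

/-- The Riordan/Cauchy sum `F n x y = Σ_k C(n,k) (x+k)^k (y+n-k)^{n-k}`. -/
private def Fs (n x y : ℕ) : ℕ :=
  ∑ k ∈ Finset.range (n + 1), n.choose k * ((x + k) ^ k * (y + (n - k)) ^ (n - k))

/-- The Abel sum `A n x y = Σ_k C(n,k) x (x+k)^{k-1} (y+n-k)^{n-k}`, with the `k = 0`
term interpreted as `(y+n)^n`. -/
private def As (n x y : ℕ) : ℕ :=
  (y + n) ^ n +
    ∑ k ∈ Finset.range n,
      n.choose (k + 1) * (x * (x + (k + 1)) ^ k * (y + (n - (k + 1))) ^ (n - (k + 1)))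

/-- `G n s = Σ_j (n!/j!) s^j` written without division. -/
private def Gs (n s : ℕ) : ℕ :=
  ∑ j ∈ Finset.range (n + 1), n.choose j * (n - j)! * s ^ j

private lemma Gs_succ (n s : ℕ) : Gs (n + 1) s = s ^ (n + 1) + (n + 1) * Gs n s := by
  rw [Gs, Gs, Finset.sum_range_succ, Finset.mul_sum]
  have h1 : ∀ j ∈ Finset.range (n + 1),
      (n + 1).choose j * (n + 1 - j)! * s ^ j = (n + 1) * (n.choose j * (n - j)! * s ^ j) := by
    intro j hj
    have hj' : j ≤ n := by simpa using Nat.lt_succ_iff.mp (Finset.mem_range.mp hj)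
    have key : (n + 1).choose j * (n + 1 - j)! = (n + 1) * (n.choose j * (n - j)!) := by
      have h2 := Nat.choose_mul_factorial_mul_factorial (Nat.le_succ_of_le hj')
      have h3 := Nat.choose_mul_factorial_mul_factorial hj'
      have hpos : 0 < (j)! := Nat.factorial_pos j
      apply Nat.eq_of_mul_eq_mul_right hpos
      calc (n + 1).choose j * (n + 1 - j)! * j !
          = (n + 1).choose j * j ! * (n + 1 - j)! := by ring
        _ = (n + 1)! := h2
        _ = (n + 1) * n ! := rfl
        _ = (n + 1) * (n.choose j * j ! * (n - j)!) := by rw [h3]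
        _ = (n + 1) * (n.choose j * (n - j)!) * j ! := by ring
    rw [← mul_assoc, key]
  rw [Finset.sum_congr rfl h1]
  simp [Nat.choose_self]
  try ring

private lemma key (n : ℕ) :
    (∀ x y : ℕ, As n x y = (x + y + n) ^ n) ∧ (∀ x y : ℕ, Fs n x y = Gs n (x + y + n)) := by
  induction n with
  | zero => constructor <;> intro x y <;> simp [As, Fs, Gs]
  | succ n ih =>
    obtain ⟨ihA, ihF⟩ := ih
    have hShift : ∀ x y : ℕ, Fs n (x + 1) y = Fs n x (y + 1) := by
      intro x y
      rw [ihF, ihF, show x + 1 + y + n = x + (y + 1) + n by ring]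
    have hArec : ∀ x y : ℕ, As (n + 1) x y = (x + y + (n + 1)) * As n x (y + 1) := by
      intro x y
      have e1 : As (n + 1) x y = (y + (n + 1)) ^ (n + 1) +
          (∑ k ∈ Finset.range (n + 1),
            n.choose k * (x * (x + (k + 1)) ^ k * (y + (n - k)) ^ (n - k)) +
           ∑ k ∈ Finset.range (n + 1),
            n.choose (k + 1) * (x * (x + (k + 1)) ^ k * (y + (n - k)) ^ (n - k))) := by
        rw [As, ← Finset.sum_add_distrib]
        congr 1
        apply Finset.sum_congr rfl
        intro k _
        rw [show (n + 1) - (k + 1) = n - k from Nat.succ_sub_succ n k,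
          Nat.choose_succ_succ, add_mul]
      have e2 : ∑ k ∈ Finset.range (n + 1),
          n.choose k * (x * (x + (k + 1)) ^ k * (y + (n - k)) ^ (n - k)) =
          x * Fs n (x + 1) y := by
        rw [Fs, Finset.mul_sum]
        apply Finset.sum_congr rfl
        intro k _
        ring
      have e3 : x * Fs n x (y + 1) = x * (y + 1 + n) ^ n +
          ∑ k ∈ Finset.range n,
            x * (n.choose (k + 1) *
              ((x + (k + 1)) ^ (k + 1) * (y + 1 + (n - (k + 1))) ^ (n - (k + 1)))) := by
        rw [Fs, Finset.sum_range_succ', mul_add, Finset.mul_sum]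
        simp
        try ring
      have e4 : ∑ k ∈ Finset.range (n + 1),
          n.choose (k + 1) * (x * (x + (k + 1)) ^ k * (y + (n - k)) ^ (n - k)) =
          ∑ k ∈ Finset.range n,
          n.choose (k + 1) * (x * (x + (k + 1)) ^ k * (y + (n - k)) ^ (n - k)) := by
        rw [Finset.sum_range_succ, Nat.choose_succ_self]
        simp
      rw [e1, e2, hShift, e3, e4]
      rw [As, mul_add, Finset.mul_sum]
      have hb : (y + (n + 1)) ^ (n + 1) + x * (y + 1 + n) ^ n =
          (x + y + (n + 1)) * (y + 1 + n) ^ n := by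
        rw [show y + (n + 1) = y + 1 + n by ring, pow_succ]
        ring
      have hsum : ∀ k ∈ Finset.range n,
          x * (n.choose (k + 1) *
              ((x + (k + 1)) ^ (k + 1) * (y + 1 + (n - (k + 1))) ^ (n - (k + 1)))) +
            n.choose (k + 1) * (x * (x + (k + 1)) ^ k * (y + (n - k)) ^ (n - k)) =
          (x + y + (n + 1)) *
            (n.choose (k + 1) * (x * (x + (k + 1)) ^ k * (y + 1 + (n - (k + 1))) ^ (n - (k + 1)))) := by
        intro k hk
        have hk' : k < n := Finset.mem_range.mp hk
        have hm : n - k = (n - (k + 1)) + 1 := by omega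
        have hm2 : k + (n - (k + 1)) + 2 = n + 1 := by omega
        set m := n - (k + 1) with hmdef
        rw [hm]
        rw [show y + (m + 1) = y + 1 + m by ring, pow_succ, pow_succ]
        have : (x + (k + 1)) + (y + 1 + m) = x + y + (n + 1) := by omega
        calc x * (↑(n.choose (k + 1)) * ((x + (k + 1)) ^ k * (x + (k + 1)) * (y + 1 + m) ^ m)) +
              ↑(n.choose (k + 1)) * (x * (x + (k + 1)) ^ k * ((y + 1 + m) ^ m * (y + 1 + m)))
            = ((x + (k + 1)) + (y + 1 + m)) *
              (↑(n.choose (k + 1)) * (x * (x + (k + 1)) ^ k * (y + 1 + m) ^ m)) := by ring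
          _ = (x + y + (n + 1)) *
              (↑(n.choose (k + 1)) * (x * (x + (k + 1)) ^ k * (y + 1 + m) ^ m)) := by rw [this]
      have hs : ∑ k ∈ Finset.range n,
            x * (n.choose (k + 1) *
              ((x + (k + 1)) ^ (k + 1) * (y + 1 + (n - (k + 1))) ^ (n - (k + 1)))) +
          ∑ k ∈ Finset.range n,
            n.choose (k + 1) * (x * (x + (k + 1)) ^ k * (y + (n - k)) ^ (n - k)) =
          ∑ k ∈ Finset.range n, (x + y + (n + 1)) *
            (n.choose (k + 1) *
              (x * (x + (k + 1)) ^ k * (y + 1 + (n - (k + 1))) ^ (n - (k + 1)))) := by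
        rw [← Finset.sum_add_distrib]
        exact Finset.sum_congr rfl hsum
      rw [← hb, ← hs]
      ring
    have hA : ∀ x y : ℕ, As (n + 1) x y = (x + y + (n + 1)) ^ (n + 1) := by
      intro x y
      rw [hArec, ihA, show x + (y + 1) + n = x + y + (n + 1) by ring]
      ring
    have hFrec : ∀ x y : ℕ, Fs (n + 1) x y = As (n + 1) x y + (n + 1) * Fs n (x + 1) y := by
      intro x y
      rw [Fs, Finset.sum_range_succ']
      have e1 : ∀ k ∈ Finset.range (n + 1),
          (n + 1).choose (k + 1) *
            ((x + (k + 1)) ^ (k + 1) * (y + ((n + 1) - (k + 1))) ^ ((n + 1) - (k + 1))) =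
          (n + 1).choose (k + 1) * (x * (x + (k + 1)) ^ k * (y + (n - k)) ^ (n - k)) +
          (n + 1) * (n.choose k * ((x + 1 + k) ^ k * (y + (n - k)) ^ (n - k))) := by
        intro k _
        rw [show (n + 1) - (k + 1) = n - k from Nat.succ_sub_succ n k]
        have hc : (n + 1).choose (k + 1) * (k + 1) = (n + 1) * n.choose k := by
          rw [← Nat.add_one_mul_choose_eq]
        calc (n + 1).choose (k + 1) * ((x + (k + 1)) ^ (k + 1) * (y + (n - k)) ^ (n - k))
            = (n + 1).choose (k + 1) * (x * (x + (k + 1)) ^ k * (y + (n - k)) ^ (n - k)) +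
              ((n + 1).choose (k + 1) * (k + 1)) *
                ((x + (k + 1)) ^ k * (y + (n - k)) ^ (n - k)) := by
              rw [pow_succ]; ring
          _ = _ := by rw [hc, show x + (k + 1) = x + 1 + k by ring]; ring
      rw [Finset.sum_congr rfl e1, Finset.sum_add_distrib, As, Fs, Finset.mul_sum]
      simp
      ring
    refine ⟨hA, ?_⟩
    intro x y
    rw [hFrec, hA, hShift, ihF, show x + (y + 1) + n = x + y + (n + 1) by ring,
      ← Gs_succ]

/-- `α(n) = Σ_{k=0}^{n} C(n,k) k^k (n−k)^{n−k} = Σ_{k=0}^{n} (n!/k!) n^k`,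
with the convention `0^0 = 1`. -/
theorem alpha_eval (n : ℕ) (hn : 0 < n) :
    ∑ k ∈ Finset.range (n + 1), n.choose k * k ^ k * (n - k) ^ (n - k)
    = ∑ k ∈ Finset.range (n + 1), n ! / k ! * n ^ k := by
  have h1 : ∑ k ∈ Finset.range (n + 1), n.choose k * k ^ k * (n - k) ^ (n - k) = Fs n 0 0 := by
    rw [Fs]
    apply Finset.sum_congr rfl
    intro k _
    simp [mul_assoc]
  have h2 : ∑ k ∈ Finset.range (n + 1), n ! / k ! * n ^ k = Gs n n := by
    rw [Gs]
    apply Finset.sum_congr rfl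
    intro k hk
    have hk' : k ≤ n := Nat.lt_succ_iff.mp (Finset.mem_range.mp hk)
    congr 1
    have h3 := Nat.choose_mul_factorial_mul_factorial hk'
    rw [Nat.div_eq_of_eq_mul_left (Nat.factorial_pos k)]
    rw [← h3]; ring
  rw [h1, h2, (key n).2]
  simp
end

section
/- For every positive integer n, Σ_{k₁+k₂+k₃=n} (n!/(k₁!k₂!k₃!)) k₁^{k₁} k₂^{k₂} k₃^{k₃} = Σ_{k=0}^{n} (n!/k!) (n+1−k) n^k, where the left sum is over triples of nonnegative integers summing to n and 0^0 = 1. -/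
open Finset Nat Polynomial

lemma pascal_reduce (n : ℕ) (g : ℕ → ℚ) :
    ∑ k ∈ range (n+2), (-1:ℚ)^k * (n+1).choose k * g k
      = ∑ k ∈ range (n+1), (-1:ℚ)^k * n.choose k * (g k - g (k+1)) := by
  rw [Finset.sum_range_succ' (fun k => (-1:ℚ)^k * (n+1).choose k * g k) (n+1)]
  have expand : ∀ k ∈ range (n+1), ((-1:ℚ))^(k+1) * ((n+1).choose (k+1)) * g (k+1)
      = -((-1:ℚ)^k * n.choose k * g (k+1)) + (-1)^(k+1) * (n.choose (k+1)) * g (k+1) := by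
    intro k _
    rw [Nat.choose_succ_succ]
    push_cast
    ring
  rw [Finset.sum_congr rfl expand, Finset.sum_add_distrib]
  have h2 : (∑ k ∈ range (n+1), (-1:ℚ)^(k+1) * (n.choose (k+1)) * g (k+1))
      + (-1:ℚ)^0 * ((n+1).choose 0) * g 0
      = ∑ k ∈ range (n+1), (-1:ℚ)^k * n.choose k * g k := by
    have e1 := Finset.sum_range_succ' (fun k => (-1:ℚ)^k * n.choose k * g k) (n+1)
    rw [Finset.sum_range_succ] at e1
    simp only [Nat.choose_succ_self, Nat.cast_zero, mul_zero, zero_mul, add_zero, pow_zero,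
      Nat.choose_zero_right, Nat.cast_one, mul_one, one_mul] at e1 ⊢
    linarith [e1]
  rw [add_assoc, h2]
  rw [← Finset.sum_add_distrib]
  apply Finset.sum_congr rfl
  intro k _
  ring

lemma alt_sum_pow_eq_zero : ∀ n : ℕ, ∀ m : ℕ, m < n →
    ∑ k ∈ range (n+1), (-1:ℚ)^k * n.choose k * (k:ℚ)^m = 0 := by
  intro n
  induction n with
  | zero => intro m hm; omega
  | succ n ih =>
    intro m hm
    rw [show n+1+1 = n+2 from rfl, pascal_reduce n (fun k => (k:ℚ)^m)]
    push_cast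
    have key : ∀ k : ℕ, (-1:ℚ)^k * n.choose k * ((k:ℚ)^m - ((k:ℚ)+1)^m)
        = ∑ i ∈ range m, -((m.choose i : ℚ) * ((-1:ℚ)^k * n.choose k * (k:ℚ)^i)) := by
      intro k
      have h := add_pow (k:ℚ) 1 m
      rw [Finset.sum_range_succ] at h
      simp only [one_pow, mul_one, Nat.choose_self, Nat.cast_one, Nat.sub_self] at h
      calc (-1:ℚ)^k * n.choose k * ((k:ℚ)^m - ((k:ℚ)+1)^m)
          = -(((-1:ℚ)^k * n.choose k) * ∑ i ∈ range m, (k:ℚ)^i * m.choose i) := by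
            rw [h]; ring
        _ = ∑ i ∈ range m, -((m.choose i : ℚ) * ((-1:ℚ)^k * n.choose k * (k:ℚ)^i)) := by
            rw [Finset.mul_sum, ← Finset.sum_neg_distrib]
            exact Finset.sum_congr rfl fun i _ => by ring
    rw [Finset.sum_congr rfl (fun k _ => key k), Finset.sum_comm]
    apply Finset.sum_eq_zero
    intro i hi
    have hin : i < n := by
      have := Finset.mem_range.mp hi
      omega
    have h0 := ih i hin
    calc ∑ k ∈ range (n+1), -((m.choose i : ℚ) * ((-1:ℚ)^k * n.choose k * (k:ℚ)^i))
        = -((m.choose i : ℚ) * ∑ k ∈ range (n+1), (-1:ℚ)^k * n.choose k * (k:ℚ)^i) := by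
          rw [Finset.mul_sum, Finset.sum_neg_distrib]
      _ = 0 := by rw [h0]; ring

lemma alt_sum_pow_self (n : ℕ) :
    ∑ k ∈ range (n+1), (-1:ℚ)^k * n.choose k * (k:ℚ)^n = (-1:ℚ)^n * n ! := by
  induction n with
  | zero => simp
  | succ n ih =>
    rw [show n+1+1 = n+2 from rfl, pascal_reduce n (fun k => (k:ℚ)^(n+1))]
    push_cast
    have key : ∀ k : ℕ, (-1:ℚ)^k * n.choose k * ((k:ℚ)^(n+1) - ((k:ℚ)+1)^(n+1))
        = ∑ i ∈ range (n+1), -(((n+1).choose i : ℚ) * ((-1:ℚ)^k * n.choose k * (k:ℚ)^i)) := by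
      intro k
      have h := add_pow (k:ℚ) 1 (n+1)
      rw [Finset.sum_range_succ] at h
      simp only [one_pow, mul_one, Nat.choose_self, Nat.cast_one, Nat.sub_self] at h
      calc (-1:ℚ)^k * n.choose k * ((k:ℚ)^(n+1) - ((k:ℚ)+1)^(n+1))
          = -(((-1:ℚ)^k * n.choose k) * ∑ i ∈ range (n+1), (k:ℚ)^i * (n+1).choose i) := by
            rw [h]; ring
        _ = ∑ i ∈ range (n+1), -(((n+1).choose i : ℚ) * ((-1:ℚ)^k * n.choose k * (k:ℚ)^i)) := by
            rw [Finset.mul_sum, ← Finset.sum_neg_distrib]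
            exact Finset.sum_congr rfl fun i _ => by ring
    rw [Finset.sum_congr rfl (fun k _ => key k), Finset.sum_comm]
    rw [Finset.sum_range_succ]
    have hzero : ∀ i ∈ range n,
        ∑ k ∈ range (n+1), -(((n+1).choose i : ℚ) * ((-1:ℚ)^k * n.choose k * (k:ℚ)^i)) = 0 := by
      intro i hi
      have h0 := alt_sum_pow_eq_zero n i (Finset.mem_range.mp hi)
      calc ∑ k ∈ range (n+1), -(((n+1).choose i : ℚ) * ((-1:ℚ)^k * n.choose k * (k:ℚ)^i))
          = -(((n+1).choose i : ℚ) * ∑ k ∈ range (n+1), (-1:ℚ)^k * n.choose k * (k:ℚ)^i) := by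
            rw [Finset.mul_sum, Finset.sum_neg_distrib]
        _ = 0 := by rw [h0]; ring
    rw [Finset.sum_congr rfl hzero, Finset.sum_const, smul_zero, zero_add]
    calc ∑ k ∈ range (n+1), -(((n+1).choose n : ℚ) * ((-1:ℚ)^k * n.choose k * (k:ℚ)^n))
        = -(((n+1).choose n : ℚ) * ∑ k ∈ range (n+1), (-1:ℚ)^k * n.choose k * (k:ℚ)^n) := by
          rw [Finset.mul_sum, Finset.sum_neg_distrib]
      _ = (-1:ℚ)^(n+1) * (n+1)! := by
          rw [ih, Nat.choose_succ_self_right, Nat.factorial_succ]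
          push_cast
          ring

lemma neg_one_pow_sub_q (N j : ℕ) (h : j ≤ N) : (-1:ℚ)^(N-j) = (-1:ℚ)^N * (-1:ℚ)^j := by
  have h2 : ((-1:ℚ)^j) * (-1:ℚ)^j = 1 := by rw [← mul_pow]; norm_num
  calc (-1:ℚ)^(N-j) = (-1:ℚ)^(N-j) * ((-1:ℚ)^j * (-1:ℚ)^j) := by rw [h2, mul_one]
    _ = (-1:ℚ)^(N-j+j) * (-1:ℚ)^j := by rw [pow_add]; ring
    _ = (-1:ℚ)^N * (-1:ℚ)^j := by rw [Nat.sub_add_cancel h]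

lemma poly_eq_of_deriv (p q : ℚ[X]) (a : ℚ) (h : Polynomial.derivative p = Polynomial.derivative q)
    (h2 : p.eval a = q.eval a) : p = q := by
  have h3 : Polynomial.derivative (p - q) = 0 := by rw [derivative_sub, h, sub_self]
  have h4 : p - q = C ((p - q).coeff 0) := eq_C_of_derivative_eq_zero h3
  have h5 := congrArg (eval a) h4
  rw [eval_sub, h2, sub_self, eval_C] at h5
  have h6 : p - q = 0 := by rw [h4, ← h5, map_zero]
  linear_combination h6

lemma deriv_sum_pow (m : ℕ) (w c : ℕ → ℚ) :
    Polynomial.derivative (∑ j ∈ range (m+1), C (w j) * (X + C (c j))^j)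
    = ∑ j ∈ range m, C (w (j+1) * ((j:ℚ)+1)) * (X + C (c (j+1)))^j := by
  rw [derivative_sum, Finset.sum_range_succ']
  simp only [pow_zero, mul_one, derivative_C, add_zero]
  apply Finset.sum_congr rfl
  intro j _
  rw [derivative_C_mul, derivative_pow_succ, derivative_X_add_C, mul_one, ← mul_assoc, ← C_mul]

lemma sum_tri (N : ℕ) (f : ℕ → ℕ → ℚ) :
    ∑ k ∈ range (N+1), ∑ j ∈ range (N-k+1), f k j
      = ∑ m ∈ range (N+1), ∑ k ∈ range (m+1), f k (m-k) := by
  rw [Finset.sum_sigma', Finset.sum_sigma']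
  apply Finset.sum_nbij' (i := fun p => (⟨p.1 + p.2, p.1⟩ : Σ _ : ℕ, ℕ))
    (j := fun p => (⟨p.2, p.1 - p.2⟩ : Σ _ : ℕ, ℕ))
  · rintro ⟨k, j⟩ ha
    simp only [Finset.mem_sigma, Finset.mem_range] at ha ⊢
    omega
  · rintro ⟨m, k⟩ ha
    simp only [Finset.mem_sigma, Finset.mem_range] at ha ⊢
    omega
  · rintro ⟨k, j⟩ ha
    simp
  · rintro ⟨m, k⟩ ha
    simp only [Finset.mem_sigma, Finset.mem_range] at ha
    have hk : k + (m - k) = m := by omega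
    simp [hk]
  · rintro ⟨k, j⟩ ha
    simp

lemma cauchy_poly : ∀ n : ℕ, ∀ s : ℚ,
    (∑ j ∈ range (n+1), C ((n.choose j : ℚ) * ((n-j : ℕ):ℚ)^(n-j)) * (X + C ((j:ℚ) + s))^j : ℚ[X])
  = ∑ i ∈ range (n+1), C ((n ! : ℚ) / (i ! : ℚ)) * (X + C ((n:ℚ) + s))^i := by
  intro n
  induction n with
  | zero => intro s; simp
  | succ n ih =>
    intro s
    apply poly_eq_of_deriv _ _ (-(((n:ℚ)+1) + s))
    · rw [deriv_sum_pow (n+1) (fun j => ((n+1).choose j : ℚ) * ((n+1-j : ℕ):ℚ)^(n+1-j))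
          (fun j => (j:ℚ) + s),
        deriv_sum_pow (n+1) (fun i => (((n+1)! : ℕ) : ℚ) / (i ! : ℚ))
          (fun _ => (((n+1):ℕ):ℚ) + s)]
      have lstep : ∀ j ∈ range (n+1),
          C ((((n+1).choose (j+1) : ℚ) * ((n+1-(j+1) : ℕ):ℚ)^(n+1-(j+1))) * ((j:ℚ)+1))
              * (X + C (((j+1:ℕ):ℚ) + s))^j
          = C ((n:ℚ)+1) * (C ((n.choose j : ℚ) * ((n-j : ℕ):ℚ)^(n-j))
              * (X + C ((j:ℚ) + (s+1)))^j) := by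
        intro j _
        have hc : (((j+1:ℕ)):ℚ) + s = (j:ℚ) + (s+1) := by push_cast; ring
        have hn : n + 1 - (j + 1) = n - j := by omega
        rw [hn, hc, ← mul_assoc, ← C_mul]
        congr 1
        rw [C_inj]
        have key := Nat.add_one_mul_choose_eq n j
        have keyq : ((n:ℚ)+1) * (n.choose j : ℚ) = ((n+1).choose (j+1) : ℚ) * ((j:ℚ)+1) := by
          exact_mod_cast congrArg (Nat.cast : ℕ → ℚ) key
        linear_combination (-(((n-j:ℕ):ℚ)^(n-j))) * keyq
      have rstep : ∀ i ∈ range (n+1),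
          C (((((n+1)! : ℕ):ℚ) / ((i+1)! : ℚ)) * ((i:ℚ)+1)) * (X + C ((((n+1):ℕ):ℚ) + s))^i
          = C ((n:ℚ)+1) * (C ((n ! : ℚ) / (i ! : ℚ)) * (X + C ((n:ℚ) + (s+1)))^i) := by
        intro i _
        have hc : (((n+1):ℕ):ℚ) + s = (n:ℚ) + (s+1) := by push_cast; ring
        rw [hc, ← mul_assoc, ← C_mul]
        congr 1
        rw [C_inj]
        have h1 : ((i+1)! : ℚ) = ((i:ℚ)+1) * (i ! : ℚ) := by
          rw [Nat.factorial_succ]; push_cast; ring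
        have h2 : (((n+1)! : ℕ) : ℚ) = ((n:ℚ)+1) * (n ! : ℚ) := by
          rw [Nat.factorial_succ]; push_cast; ring
        have hi0 : (i ! : ℚ) ≠ 0 := by exact_mod_cast (Nat.factorial_ne_zero i)
        have hi1 : ((i:ℚ)+1) ≠ 0 := by positivity
        rw [h1, h2]
        field_simp
      rw [Finset.sum_congr rfl lstep, Finset.sum_congr rfl rstep,
        ← Finset.mul_sum, ← Finset.mul_sum, ih (s+1)]
    · simp only [eval_finset_sum, eval_mul, eval_pow, eval_add, eval_X, eval_C]
      have lstep : ∀ j ∈ range (n+1+1),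
          ((n+1).choose j : ℚ) * ((n+1-j : ℕ):ℚ)^(n+1-j)
              * (-(((n:ℚ)+1) + s) + ((j:ℚ) + s))^j
          = (-1:ℚ)^j * ((n+1).choose j : ℚ) * ((n+1-j:ℕ):ℚ)^(n+1) := by
        intro j hj
        have hj' : j ≤ n+1 := by have := Finset.mem_range.mp hj; omega
        have h1 : -(((n:ℚ)+1) + s) + ((j:ℚ) + s) = -(((n+1-j : ℕ):ℚ)) := by
          rw [Nat.cast_sub hj']; push_cast; ring
        rw [h1, neg_pow]
        have h2 : ((n+1-j:ℕ):ℚ)^(n+1-j) * ((n+1-j:ℕ):ℚ)^j = ((n+1-j:ℕ):ℚ)^(n+1) := by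
          rw [← pow_add, Nat.sub_add_cancel hj']
        calc ((n+1).choose j : ℚ) * ((n+1-j : ℕ):ℚ)^(n+1-j) * ((-1:ℚ)^j * ((n+1-j:ℕ):ℚ)^j)
            = (-1:ℚ)^j * ((n+1).choose j : ℚ)
                * (((n+1-j:ℕ):ℚ)^(n+1-j) * ((n+1-j:ℕ):ℚ)^j) := by ring
          _ = (-1:ℚ)^j * ((n+1).choose j : ℚ) * ((n+1-j:ℕ):ℚ)^(n+1) := by rw [h2]
      rw [Finset.sum_congr rfl lstep]
      have refl1 := Finset.sum_range_reflect
        (fun j => (-1:ℚ)^j * ((n+1).choose j : ℚ) * ((n+1-j:ℕ):ℚ)^(n+1)) (n+2)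
      rw [← refl1]
      have lstep2 : ∀ j ∈ range (n+2),
          (-1:ℚ)^(n+2-1-j) * ((n+1).choose (n+2-1-j) : ℚ) * ((n+1-(n+2-1-j):ℕ):ℚ)^(n+1)
          = (-1:ℚ)^(n+1) * ((-1:ℚ)^j * ((n+1).choose j : ℚ) * ((j:ℕ):ℚ)^(n+1)) := by
        intro j hj
        have hj' : j ≤ n+1 := by have := Finset.mem_range.mp hj; omega
        have e1 : n+2-1-j = n+1-j := by omega
        have e2 : n+1-(n+1-j) = j := by omega
        rw [e1, e2, neg_one_pow_sub_q (n+1) j hj', Nat.choose_symm hj']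
        ring
      rw [Finset.sum_congr rfl lstep2, ← Finset.mul_sum]
      have := alt_sum_pow_self (n+1)
      rw [show n+1+1 = n+2 from rfl] at this
      have halt : ∑ j ∈ range (n+2), (-1:ℚ)^j * ((n+1).choose j : ℚ) * ((j:ℕ):ℚ)^(n+1)
          = (-1:ℚ)^(n+1) * ((n+1)! : ℕ) := this
      rw [halt]
      have rstep : ∀ i ∈ range (n+1+1),
          (((n+1)! : ℕ):ℚ) / (i ! : ℚ) * (-(((n:ℚ)+1) + s) + ((((n+1):ℕ):ℚ) + s))^i
          = (((n+1)! : ℕ):ℚ) / (i ! : ℚ) * (0:ℚ)^i := by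
        intro i _
        have hz : -(((n:ℚ)+1)+s) + ((((n+1):ℕ):ℚ) + s) = 0 := by push_cast; ring
        rw [hz]
      rw [Finset.sum_congr rfl rstep, Finset.sum_eq_single 0]
      · simp only [pow_zero, mul_one, Nat.factorial_zero, Nat.cast_one, div_one]
        calc (-1:ℚ)^(n+1) * ((-1:ℚ)^(n+1) * (((n+1)! : ℕ):ℚ))
            = ((-1:ℚ)*(-1:ℚ))^(n+1) * (((n+1)! : ℕ):ℚ) := by rw [mul_pow]; ring
          _ = (((n+1)! : ℕ):ℚ) := by norm_num
      · intro b _ hb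
        rw [zero_pow hb, mul_zero]
      · intro h
        exact absurd (Finset.mem_range.mpr (by omega)) h

lemma choose_fact_eq (N m k : ℕ) (hk : k ≤ m) (hm : m ≤ N) :
    (N.choose k : ℚ) * ((N-k)! : ℚ) / ((m-k)! : ℚ) = (N ! : ℚ) / (m ! : ℚ) * (m.choose k : ℚ) := by
  have h1 : N.choose k * (k ! * (N-k)!) = N ! := by
    rw [← Nat.choose_mul_factorial_mul_factorial (le_trans hk hm)]; ring
  have h2 : m.choose k * (k ! * (m-k)!) = m ! := by
    rw [← Nat.choose_mul_factorial_mul_factorial hk]; ring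
  have hNat : N.choose k * (N-k)! * m ! * k ! = N ! * m.choose k * (m-k)! * k ! := by
    calc N.choose k * (N-k)! * m ! * k ! = (N.choose k * (k ! * (N-k)!)) * m ! := by ring
      _ = N ! * (m.choose k * (k ! * (m-k)!)) := by rw [h1, h2]
      _ = N ! * m.choose k * (m-k)! * k ! := by ring
  have hNat2 : N.choose k * (N-k)! * m ! = N ! * m.choose k * (m-k)! :=
    Nat.eq_of_mul_eq_mul_right (Nat.factorial_pos k) hNat
  have hq : (N.choose k : ℚ) * ((N-k)! : ℚ) * (m ! : ℚ)
      = (N ! : ℚ) * (m.choose k : ℚ) * ((m-k)! : ℚ) := by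
    exact_mod_cast congrArg (Nat.cast : ℕ → ℚ) hNat2
  have f1 : ((m-k)! : ℚ) ≠ 0 := by exact_mod_cast Nat.factorial_ne_zero _
  have f2 : (m ! : ℚ) ≠ 0 := by exact_mod_cast Nat.factorial_ne_zero _
  field_simp
  linear_combination hq

lemma anchor (N : ℕ) :
    ∑ k ∈ range (N+1), (N.choose k : ℚ) * (k:ℚ)^k *
      ∑ j ∈ range (N-k+1), ((N-k)! : ℚ)/(j ! : ℚ) * (-(k:ℚ))^j
    = ((N:ℚ)+1) * (N ! : ℚ) := by
  have step1 : ∀ k ∈ range (N+1),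
      (N.choose k : ℚ) * (k:ℚ)^k * ∑ j ∈ range (N-k+1), ((N-k)! : ℚ)/(j ! : ℚ) * (-(k:ℚ))^j
      = ∑ j ∈ range (N-k+1),
          (N.choose k : ℚ) * (k:ℚ)^k * (((N-k)! : ℚ)/(j ! : ℚ)) * (-(k:ℚ))^j := by
    intro k _
    rw [Finset.mul_sum]
    exact Finset.sum_congr rfl fun j _ => by ring
  rw [Finset.sum_congr rfl step1,
    sum_tri N (fun k j => (N.choose k : ℚ) * (k:ℚ)^k * (((N-k)! : ℚ)/(j ! : ℚ)) * (-(k:ℚ))^j)]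
  have inner : ∀ m ∈ range (N+1),
      ∑ k ∈ range (m+1),
        (N.choose k : ℚ) * (k:ℚ)^k * (((N-k)! : ℚ)/((m-k) ! : ℚ)) * (-(k:ℚ))^(m-k)
      = (N ! : ℚ) := by
    intro m hm
    have hmN : m ≤ N := by have := Finset.mem_range.mp hm; omega
    have tstep : ∀ k ∈ range (m+1),
        (N.choose k : ℚ) * (k:ℚ)^k * (((N-k)! : ℚ)/((m-k) ! : ℚ)) * (-(k:ℚ))^(m-k)
        = (N ! : ℚ)/(m ! : ℚ) * (-1:ℚ)^m * ((-1:ℚ)^k * (m.choose k : ℚ) * (k:ℚ)^m) := by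
      intro k hk
      have hk' : k ≤ m := by have := Finset.mem_range.mp hk; omega
      have h3 := choose_fact_eq N m k hk' hmN
      have e1 : (k:ℚ)^k * (k:ℚ)^(m-k) = (k:ℚ)^m := by
        rw [← pow_add]
        congr 1
        omega
      have e2 : (-1:ℚ)^(m-k) = (-1:ℚ)^m * (-1:ℚ)^k := neg_one_pow_sub_q m k hk'
      rw [neg_pow, e2]
      calc (N.choose k : ℚ) * (k:ℚ)^k * (((N-k)! : ℚ)/((m-k) ! : ℚ))
            * ((-1:ℚ)^m * (-1:ℚ)^k * (k:ℚ)^(m-k))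
          = ((N.choose k : ℚ) * ((N-k)! : ℚ) / ((m-k)! : ℚ))
            * ((-1:ℚ)^m * (-1:ℚ)^k * ((k:ℚ)^k * (k:ℚ)^(m-k))) := by ring
        _ = ((N ! : ℚ) / (m ! : ℚ) * (m.choose k : ℚ))
            * ((-1:ℚ)^m * (-1:ℚ)^k * (k:ℚ)^m) := by rw [h3, e1]
        _ = (N ! : ℚ)/(m ! : ℚ) * (-1:ℚ)^m * ((-1:ℚ)^k * (m.choose k : ℚ) * (k:ℚ)^m) := by
            ring
    rw [Finset.sum_congr rfl tstep, ← Finset.mul_sum, alt_sum_pow_self m]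
    have f2 : (m ! : ℚ) ≠ 0 := by exact_mod_cast Nat.factorial_ne_zero _
    field_simp
    have hsq : ((-1:ℚ)^m)*((-1:ℚ)^m) = 1 := by rw [← mul_pow]; norm_num
    linear_combination hsq
  rw [Finset.sum_congr rfl inner, Finset.sum_const, Finset.card_range]
  push_cast [nsmul_eq_mul]
  ring

lemma abel3_poly : ∀ n : ℕ, ∀ s : ℚ,
    (∑ k ∈ range (n+1), C ((n.choose k : ℚ) * (k:ℚ)^k) *
        ∑ j ∈ range (n-k+1), C (((n-k)! : ℚ) / (j ! : ℚ)) * (X + C (((n-k:ℕ):ℚ) + s))^j : ℚ[X])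
  = ∑ j ∈ range (n+1), C ((n ! : ℚ)/(j ! : ℚ) * ((n:ℚ)+1-(j:ℚ))) * (X + C ((n:ℚ) + s))^j := by
  intro n
  induction n with
  | zero => intro s; simp
  | succ n ih =>
    intro s
    apply poly_eq_of_deriv _ _ (-(((n:ℚ)+1) + s))
    · rw [derivative_sum,
        deriv_sum_pow (n+1) (fun j => ((n+1)! : ℚ)/(j ! : ℚ) * (((n+1:ℕ):ℚ)+1-(j:ℚ)))
          (fun _ => (((n+1):ℕ):ℚ) + s)]
      have dterm : ∀ k ∈ range (n+1+1),
          Polynomial.derivative (C (((n+1).choose k : ℚ) * (k:ℚ)^k) *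
            ∑ j ∈ range (n+1-k+1), C (((n+1-k)! : ℚ) / (j ! : ℚ)) * (X + C (((n+1-k:ℕ):ℚ) + s))^j)
          = C (((n+1).choose k : ℚ) * (k:ℚ)^k) *
            ∑ j ∈ range (n+1-k), C (((n+1-k)! : ℚ) / ((j+1) ! : ℚ) * ((j:ℚ)+1))
              * (X + C (((n+1-k:ℕ):ℚ) + s))^j := by
        intro k _
        rw [derivative_C_mul,
          deriv_sum_pow (n+1-k) (fun j => ((n+1-k)! : ℚ)/(j ! : ℚ))
            (fun _ => (((n+1-k):ℕ):ℚ) + s)]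
      rw [Finset.sum_congr rfl dterm, Finset.sum_range_succ]
      rw [show n+1-(n+1) = 0 from by omega]
      simp only [Finset.range_zero, Finset.sum_empty, mul_zero, add_zero]
      have lstep : ∀ k ∈ range (n+1),
          C (((n+1).choose k : ℚ) * (k:ℚ)^k) *
            ∑ j ∈ range (n+1-k), C (((n+1-k)! : ℚ) / ((j+1) ! : ℚ) * ((j:ℚ)+1))
              * (X + C (((n+1-k:ℕ):ℚ) + s))^j
          = C ((n:ℚ)+1) * (C ((n.choose k : ℚ) * (k:ℚ)^k) *
            ∑ j ∈ range (n-k+1), C (((n-k)! : ℚ) / (j ! : ℚ))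
              * (X + C (((n-k:ℕ):ℚ) + (s+1)))^j) := by
        intro k hk
        have hk' : k ≤ n := by have := Finset.mem_range.mp hk; omega
        have hm1 : n+1-k = (n-k)+1 := by omega
        have hconst : (((n+1-k:ℕ)):ℚ) + s = ((n-k:ℕ):ℚ) + (s+1) := by
          rw [hm1]; push_cast; ring
        have hcoef : ∀ j : ℕ, ((n+1-k)! : ℚ) / ((j+1) ! : ℚ) * ((j:ℚ)+1)
            = ((n+1-k:ℕ):ℚ) * (((n-k)! : ℚ) / (j ! : ℚ)) := by
          intro j
          rw [hm1, Nat.factorial_succ (n-k), Nat.factorial_succ j]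
          have f1 : (j ! : ℚ) ≠ 0 := by exact_mod_cast Nat.factorial_ne_zero _
          have f2 : ((j:ℚ)+1) ≠ 0 := by positivity
          push_cast
          field_simp
        have hinner : ∑ j ∈ range (n+1-k), C (((n+1-k)! : ℚ) / ((j+1) ! : ℚ) * ((j:ℚ)+1))
              * (X + C (((n+1-k:ℕ):ℚ) + s))^j
            = C (((n+1-k:ℕ)):ℚ) * ∑ j ∈ range (n-k+1), C (((n-k)! : ℚ) / (j ! : ℚ))
              * (X + C (((n-k:ℕ):ℚ) + (s+1)))^j := by
          rw [Finset.mul_sum, show n+1-k = n-k+1 from hm1]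
          apply Finset.sum_congr rfl
          intro j _
          rw [show n-k+1 = n+1-k from hm1.symm, hcoef j, hconst, C_mul]
          ring
        rw [hinner, ← mul_assoc, ← mul_assoc, ← C_mul, ← C_mul]
        congr 2
        have key := Nat.choose_mul_succ_eq n k
        have keyq : (n.choose k : ℚ) * ((n:ℚ)+1) = ((n+1).choose k : ℚ) * ((n+1-k:ℕ):ℚ) := by
          exact_mod_cast congrArg (Nat.cast : ℕ → ℚ) key
        linear_combination (-((k:ℚ)^k)) * keyq
      rw [Finset.sum_congr rfl lstep, ← Finset.mul_sum]
      have rstep : ∀ j ∈ range (n+1),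
          C (((n+1)! : ℚ)/((j+1) ! : ℚ) * ((((n+1):ℕ):ℚ)+1-(((j+1):ℕ):ℚ)) * ((j:ℚ)+1))
            * (X + C ((((n+1):ℕ):ℚ) + s))^j
          = C ((n:ℚ)+1) * (C ((n ! : ℚ)/(j ! : ℚ) * ((n:ℚ)+1-(j:ℚ)))
            * (X + C ((n:ℚ) + (s+1)))^j) := by
        intro j _
        have hconst : ((((n+1):ℕ)):ℚ) + s = (n:ℚ) + (s+1) := by push_cast; ring
        rw [hconst, ← mul_assoc, ← C_mul]
        congr 1
        rw [C_inj]
        have f1 : (j ! : ℚ) ≠ 0 := by exact_mod_cast Nat.factorial_ne_zero _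
        have f2 : ((j:ℚ)+1) ≠ 0 := by positivity
        rw [Nat.factorial_succ n, Nat.factorial_succ j]
        push_cast
        field_simp
        ring
      rw [Finset.sum_congr rfl rstep, ← Finset.mul_sum, ih (s+1)]
    · simp only [eval_finset_sum, eval_mul, eval_pow, eval_add, eval_X, eval_C]
      have lstep : ∀ k ∈ range (n+1+1),
          (((n+1).choose k : ℚ) * (k:ℚ)^k) *
            ∑ j ∈ range (n+1-k+1), ((n+1-k)! : ℚ)/(j ! : ℚ)
              * (-(((n:ℚ)+1) + s) + (((n+1-k:ℕ):ℚ) + s))^j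
          = (((n+1).choose k : ℚ) * (k:ℚ)^k) *
            ∑ j ∈ range (n+1-k+1), ((n+1-k)! : ℚ)/(j ! : ℚ) * (-(k:ℚ))^j := by
        intro k hk
        have hk' : k ≤ n+1 := by have := Finset.mem_range.mp hk; omega
        have hz : -(((n:ℚ)+1) + s) + (((n+1-k:ℕ):ℚ) + s) = -(k:ℚ) := by
          rw [Nat.cast_sub hk']; push_cast; ring
        rw [hz]
      rw [Finset.sum_congr rfl lstep, anchor (n+1)]
      have rstep : ∀ j ∈ range (n+1+1),
          ((n+1)! : ℚ)/(j ! : ℚ) * ((((n+1):ℕ):ℚ)+1-(j:ℚ))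
            * (-(((n:ℚ)+1) + s) + ((((n+1):ℕ):ℚ) + s))^j
          = ((n+1)! : ℚ)/(j ! : ℚ) * ((((n+1):ℕ):ℚ)+1-(j:ℚ)) * (0:ℚ)^j := by
        intro j _
        have hz : -(((n:ℚ)+1) + s) + ((((n+1):ℕ):ℚ) + s) = 0 := by push_cast; ring
        rw [hz]
      rw [Finset.sum_congr rfl rstep, Finset.sum_eq_single 0]
      · simp only [pow_zero, mul_one, Nat.factorial_zero, Nat.cast_one, div_one, Nat.cast_zero]
        push_cast
        ring
      · intro b _ hb
        rw [zero_pow hb, mul_zero]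
      · intro h
        exact absurd (Finset.mem_range.mpr (by omega)) h

lemma cor1 (m : ℕ) :
    ∑ j ∈ range (m+1), (m.choose j : ℚ) * ((m-j : ℕ):ℚ)^(m-j) * (j:ℚ)^j
      = ∑ i ∈ range (m+1), (m ! : ℚ)/(i ! : ℚ) * (m:ℚ)^i := by
  have h := congrArg (Polynomial.eval 0) (cauchy_poly m 0)
  simpa only [eval_finset_sum, eval_mul, eval_pow, eval_add, eval_X, eval_C,
    zero_add, add_zero] using h

lemma cor2 (n : ℕ) :
    ∑ k ∈ range (n+1), (n.choose k : ℚ) * (k:ℚ)^k *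
        ∑ j ∈ range (n-k+1), ((n-k)! : ℚ)/(j ! : ℚ) * ((n-k : ℕ):ℚ)^j
      = ∑ j ∈ range (n+1), (n ! : ℚ)/(j ! : ℚ) * ((n:ℚ)+1-(j:ℚ)) * (n:ℚ)^j := by
  have h := congrArg (Polynomial.eval 0) (abel3_poly n 0)
  simpa only [eval_finset_sum, eval_mul, eval_pow, eval_add, eval_X, eval_C,
    zero_add, add_zero] using h

lemma div_fact_eq_choose (n a b c : ℕ) (h : a + b + c = n) :
    n ! / (a ! * b ! * c !) = n.choose a * (n-a).choose b := by
  have ha : a ≤ n := by omega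
  have hb : b ≤ n - a := by omega
  have hc : n - a - b = c := by omega
  have h1 : n.choose a * a ! * (n-a)! = n ! := Nat.choose_mul_factorial_mul_factorial ha
  have h2 : (n-a).choose b * b ! * (n-a-b)! = (n-a)! := Nat.choose_mul_factorial_mul_factorial hb
  apply Nat.div_eq_of_eq_mul_left
  · positivity
  · rw [hc] at h2
    calc n ! = n.choose a * a ! * (n-a)! := h1.symm
      _ = n.choose a * a ! * ((n-a).choose b * b ! * c !) := by rw [h2]
      _ = n.choose a * (n-a).choose b * (a ! * b ! * c !) := by ring

theorem beta_eval' (n : ℕ) :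
    (∑ p ∈ Finset.HasAntidiagonal.antidiagonal n, ∑ q ∈ Finset.HasAntidiagonal.antidiagonal p.2,
      n ! / ((p.1)! * (q.1)! * (q.2)!) * p.1 ^ p.1 * q.1 ^ q.1 * q.2 ^ q.2)
    = ∑ k ∈ Finset.range (n + 1), n ! / k ! * (n + 1 - k) * n ^ k := by
  rw [Finset.Nat.sum_antidiagonal_eq_sum_range_succ_mk]
  have inner_rw : ∀ k ∈ range (n+1),
      (∑ q ∈ Finset.HasAntidiagonal.antidiagonal (k, n-k).2,
        n ! / (((k, n-k).1)! * (q.1)! * (q.2)!) * (k, n-k).1 ^ (k, n-k).1 * q.1 ^ q.1 * q.2 ^ q.2)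
      = ∑ j ∈ range (n-k+1),
        n ! / (k ! * j ! * (n-k-j)!) * k ^ k * j ^ j * (n-k-j) ^ (n-k-j) := by
    intro k _
    exact Finset.Nat.sum_antidiagonal_eq_sum_range_succ_mk _ _
  rw [Finset.sum_congr rfl inner_rw]
  have LHS_cast :
      ((∑ k ∈ range (n+1), ∑ j ∈ range (n-k+1),
        n ! / (k ! * j ! * (n-k-j)!) * k ^ k * j ^ j * (n-k-j) ^ (n-k-j) : ℕ) : ℚ)
      = ∑ k ∈ range (n+1), (n.choose k : ℚ) * (k:ℚ)^k *
          ∑ j ∈ range (n-k+1), ((n-k).choose j : ℚ) * ((n-k-j : ℕ):ℚ)^(n-k-j) * (j:ℚ)^j := by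
    push_cast
    apply Finset.sum_congr rfl
    intro k hk
    have hk' : k ≤ n := by have := Finset.mem_range.mp hk; omega
    rw [Finset.mul_sum]
    apply Finset.sum_congr rfl
    intro j hj
    have hj' : j ≤ n - k := by have := Finset.mem_range.mp hj; omega
    have hd : n ! / (k ! * j ! * (n-k-j)!) = n.choose k * (n-k).choose j :=
      div_fact_eq_choose n k j (n-k-j) (by omega)
    rw [hd]
    push_cast
    ring
  have RHS_cast :
      ((∑ k ∈ Finset.range (n + 1), n ! / k ! * (n + 1 - k) * n ^ k : ℕ) : ℚ)
      = ∑ j ∈ range (n+1), (n ! : ℚ)/(j ! : ℚ) * ((n:ℚ)+1-(j:ℚ)) * (n:ℚ)^j := by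
    push_cast
    apply Finset.sum_congr rfl
    intro k hk
    have hk' : k ≤ n := by have := Finset.mem_range.mp hk; omega
    have h1 : ((n ! / k ! : ℕ) : ℚ) = (n ! : ℚ)/(k ! : ℚ) :=
      Nat.cast_div (Nat.factorial_dvd_factorial hk') (by exact_mod_cast Nat.factorial_ne_zero _)
    have h2 : ((n + 1 - k : ℕ) : ℚ) = (n:ℚ)+1-(k:ℚ) := by
      rw [Nat.cast_sub (by omega)]
      push_cast
      ring
    rw [h1, h2]
  have final :
      ∑ k ∈ range (n+1), (n.choose k : ℚ) * (k:ℚ)^k *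
          ∑ j ∈ range (n-k+1), ((n-k).choose j : ℚ) * ((n-k-j : ℕ):ℚ)^(n-k-j) * (j:ℚ)^j
      = ∑ j ∈ range (n+1), (n ! : ℚ)/(j ! : ℚ) * ((n:ℚ)+1-(j:ℚ)) * (n:ℚ)^j := by
    rw [← cor2 n]
    apply Finset.sum_congr rfl
    intro k _
    rw [cor1 (n-k)]
  have := LHS_cast.trans (final.trans RHS_cast.symm)
  exact_mod_cast this


/-- `β(n) = Σ_{k₁+k₂+k₃=n} (n!/(k₁!k₂!k₃!)) k₁^{k₁} k₂^{k₂} k₃^{k₃}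
  = Σ_{k=0}^{n} (n!/k!) (n+1−k) n^k`, with the convention `0^0 = 1`. -/
theorem beta_eval (n : ℕ) (hn : 0 < n) :
    (∑ p ∈ Finset.HasAntidiagonal.antidiagonal n, ∑ q ∈ Finset.HasAntidiagonal.antidiagonal p.2,
      n ! / ((p.1)! * (q.1)! * (q.2)!) * p.1 ^ p.1 * q.1 ^ q.1 * q.2 ^ q.2)
    = ∑ k ∈ Finset.range (n + 1), n ! / k ! * (n + 1 - k) * n ^ k := by
  exact beta_eval' n
end

section
/- For every positive integer n, Σ_{k=0}^{n} (n!/k!) n^k = n^n (1 + Q(n)) as rational numbers, where Q(n) = Σ_{k=1}^{n} n!/((n−k)! n^k) is Ramanujan's Q-function; equivalently, α(n) = n^n(1 + Q(n)) where α(n) = Σ_{k=0}^{n} C(n,k) k^k (n−k)^{n−k} with 0^0 = 1. -/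
open Finset Nat

/-- `Σ_{k=0}^{n} (n!/k!) n^k = n^n (1 + Q(n))` as rational numbers, where
`Q(n) = Σ_{k=1}^{n} n!/((n−k)! n^k)` is Ramanujan's `Q`-function. -/
theorem alpha_eq_ramanujanQ (n : ℕ) (hn : 0 < n) :
    ∑ k ∈ Finset.range (n + 1), (n ! : ℚ) / (k ! : ℚ) * (n : ℚ) ^ k
    = (n : ℚ) ^ n *
        (1 + ∑ k ∈ Finset.Icc 1 n, (n ! : ℚ) / (((n - k)! : ℚ) * (n : ℚ) ^ k)) := by
  have hn0 : (n : ℚ) ≠ 0 := Nat.cast_ne_zero.mpr hn.ne'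
  rw [Finset.sum_range_succ, mul_add, mul_one, Finset.mul_sum, div_self, one_mul, add_comm ((n:ℚ)^n)]
  · congr 1
    rw [← Finset.Ico_add_one_right_eq_Icc, Finset.sum_Ico_eq_sum_range]
    rw [← Finset.sum_range_reflect]
    apply Finset.sum_congr rfl
    intro k hk
    simp only [Finset.mem_range] at hk
    have h1 : n - (1 + k) = n - 1 - k := by omega
    have hfac : (((n - (1 + k))! : ℚ)) ≠ 0 := Nat.cast_ne_zero.mpr (Nat.factorial_ne_zero _)
    have hpow : (n : ℚ) ^ (n - 1 - k) * (n : ℚ) ^ (1 + k) = (n : ℚ) ^ n := by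
      rw [← pow_add]; congr 1; omega
    rw [h1]
    field_simp
    rw [← hpow]
  · exact Nat.cast_ne_zero.mpr (Nat.factorial_ne_zero _)
end

section
/- Let T be the formal power series over ℚ with coefficients T = Σ_{n≥1} n^{n−1} X^n / n! (the tree function). Then (1 − T) · Σ_{n≥0} (n^n/n!) X^n = 1 in ℚ⟦X⟧; equivalently, Σ_{n≥0} (n^n/n!) X^n = (1 − T)⁻¹, with the convention 0^0 = 1. -/
open Nat PowerSeries

section TreeAux
open Finset

/-- Alternating sums of binomial coefficients against `k^j` vanish for `j < n`. -/
lemma D_vanish : ∀ j n : ℕ, j < n →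
    ∑ k ∈ range (n+1), (-1:ℚ)^k * (n.choose k) * (k:ℚ)^j = 0 := by
  intro j
  induction j using Nat.strong_induction_on with
  | _ j ih =>
    intro n hn
    rcases j with _ | j
    · simp only [pow_zero, mul_one]
      have h := Int.alternating_sum_range_choose_of_ne (show n ≠ 0 by omega)
      have h2 : ((∑ i ∈ range (n+1), (-1:ℤ)^i * n.choose i : ℤ) : ℚ) = 0 := by
        rw [h]; norm_num
      push_cast at h2
      convert h2 using 2
    · obtain ⟨m, rfl⟩ : ∃ m, n = m + 1 := ⟨n-1, by omega⟩
      rw [Finset.sum_range_succ']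
      have h0 : (-1:ℚ)^0 * (((m+1).choose 0 : ℕ):ℚ) * ((0:ℕ):ℚ)^(j+1) = 0 := by simp
      rw [h0, add_zero]
      have hterm : ∀ i ∈ range (m+1),
          (-1:ℚ)^(i+1) * (((m+1).choose (i+1) : ℕ):ℚ) * (((i+1:ℕ)):ℚ)^(j+1)
            = (-((m:ℚ)+1)) * ((-1:ℚ)^i * (m.choose i) * ((i:ℚ)+1)^j) := by
        intro i _
        have hc : (((m+1).choose (i+1) : ℕ):ℚ) * ((i:ℚ)+1) = ((m:ℚ)+1) * (m.choose i) := by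
          have := Nat.add_one_mul_choose_eq m i
          have h3 : ((Nat.succ m * m.choose i : ℕ):ℚ) = (((m+1).choose (i+1) * (i+1) : ℕ):ℚ) := by
            exact_mod_cast congrArg (fun x : ℕ => (x:ℚ)) this
          push_cast at h3
          linarith [h3]
        push_cast
        linear_combination ((-1:ℚ)^(i+1) * ((i:ℚ)+1)^j) * hc
      rw [Finset.sum_congr rfl hterm, ← Finset.mul_sum]
      have hexp : ∀ i : ℕ, ((i:ℚ)+1)^j = ∑ t ∈ range (j+1), (i:ℚ)^t * (j.choose t) := by
        intro i
        rw [add_pow]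
        exact Finset.sum_congr rfl fun t ht => by simp
      have hsum : ∑ i ∈ range (m+1), (-1:ℚ)^i * (m.choose i) * ((i:ℚ)+1)^j = 0 := by
        calc ∑ i ∈ range (m+1), (-1:ℚ)^i * (m.choose i) * ((i:ℚ)+1)^j
            = ∑ i ∈ range (m+1), ∑ t ∈ range (j+1),
                (j.choose t : ℚ) * ((-1:ℚ)^i * (m.choose i) * (i:ℚ)^t) := by
              refine Finset.sum_congr rfl fun i _ => ?_
              rw [hexp, Finset.mul_sum]
              exact Finset.sum_congr rfl fun t _ => by ring
          _ = ∑ t ∈ range (j+1), (j.choose t : ℚ) *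
                ∑ i ∈ range (m+1), ((-1:ℚ)^i * (m.choose i) * (i:ℚ)^t) := by
              rw [Finset.sum_comm]
              exact Finset.sum_congr rfl fun t _ => (Finset.mul_sum _ _ _).symm
          _ = 0 := by
              refine Finset.sum_eq_zero fun t ht => ?_
              rw [ih t (by simp at ht; omega) m (by simp at ht; omega)]
              ring
      rw [hsum, mul_zero]

lemma shift_vanish (m j : ℕ) (h : j < m) :
    ∑ i ∈ range (m+1), (-1:ℚ)^i * (m.choose i) * ((i:ℚ)+1)^j = 0 := by
  have hexp : ∀ i : ℕ, ((i:ℚ)+1)^j = ∑ t ∈ range (j+1), (i:ℚ)^t * (j.choose t) := by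
    intro i
    rw [add_pow]
    exact Finset.sum_congr rfl fun t ht => by simp
  calc ∑ i ∈ range (m+1), (-1:ℚ)^i * (m.choose i) * ((i:ℚ)+1)^j
      = ∑ i ∈ range (m+1), ∑ t ∈ range (j+1),
          (j.choose t : ℚ) * ((-1:ℚ)^i * (m.choose i) * (i:ℚ)^t) := by
        refine Finset.sum_congr rfl fun i _ => ?_
        rw [hexp, Finset.mul_sum]
        exact Finset.sum_congr rfl fun t _ => by ring
    _ = ∑ t ∈ range (j+1), (j.choose t : ℚ) *
          ∑ i ∈ range (m+1), ((-1:ℚ)^i * (m.choose i) * (i:ℚ)^t) := by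
        rw [Finset.sum_comm]
        exact Finset.sum_congr rfl fun t _ => (Finset.mul_sum _ _ _).symm
    _ = 0 := by
        refine Finset.sum_eq_zero fun t ht => ?_
        rw [D_vanish t m (by simp at ht; omega)]
        ring



/-- Generalized Abel polynomial sum with shift `c`. -/
noncomputable def Pg (n : ℕ) (c : ℚ) : Polynomial ℚ :=
  ∑ k ∈ range (n+1), Polynomial.C ((n.choose k : ℚ) * ((k:ℚ)+1)^(k-1)) *
    (Polynomial.X + Polynomial.C (c + ((n-k : ℕ) : ℚ)))^(n-k)

lemma pow_combine (n k : ℕ) (hk : k ≤ n+1) :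
    ((k:ℚ)+1)^(k-1) * ((k:ℚ)+1)^(n+1-k) = ((k:ℚ)+1)^n := by
  rcases k with _ | j
  · simp
  · rw [← pow_add]
    congr 1
    omega

lemma Pg_eq : ∀ n : ℕ, ∀ c : ℚ, Pg n c = (Polynomial.X + Polynomial.C (c + (n:ℚ) + 1))^n := by
  intro n
  induction n with
  | zero => intro c; simp [Pg]
  | succ n ih =>
    intro c
    have hder : Polynomial.derivative (Pg (n+1) c) = Polynomial.C ((n:ℚ)+1) * Pg n (c+1) := by
      unfold Pg
      rw [map_sum, Finset.sum_range_succ]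
      rw [Nat.sub_self, pow_zero, mul_one, Polynomial.derivative_C, add_zero, Finset.mul_sum]
      refine Finset.sum_congr rfl fun k hk => ?_
      have hkn : k ≤ n := by simp at hk; omega
      have hcast : (((n+1-k : ℕ)):ℚ) = ((n-k : ℕ):ℚ) + 1 := by
        rw [Nat.cast_sub (by omega), Nat.cast_sub hkn]
        push_cast; ring
      rw [Polynomial.derivative_C_mul, Polynomial.derivative_pow]
      simp only [Polynomial.derivative_add, Polynomial.derivative_X, Polynomial.derivative_C,
        add_zero, mul_one]
      have hexp : n + 1 - k - 1 = n - k := by omega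
      rw [hexp]
      have hnatid : (n+1).choose k * (n+1-k) = (n+1) * n.choose k := by
        rw [← Nat.choose_succ_right_eq]
        exact (Nat.add_one_mul_choose_eq n k).symm
      have hqid : (((n+1).choose k : ℕ) : ℚ) * (((n+1-k : ℕ)):ℚ) = ((n:ℚ)+1) * ((n.choose k : ℕ):ℚ) := by
        have h3 := congrArg (fun x : ℕ => (x:ℚ)) hnatid
        push_cast at h3
        linarith [h3]
      have hbase : c + (((n+1-k : ℕ)):ℚ) = (c+1) + ((n-k:ℕ):ℚ) := by rw [hcast]; ring
      rw [hbase]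
      simp only [← mul_assoc, ← Polynomial.C_mul]
      congr 2
      linear_combination ((k:ℚ)+1)^(k-1) * hqid
    have hderR : Polynomial.derivative ((Polynomial.X + Polynomial.C (c + ((n:ℚ)+1) + 1))^(n+1))
        = Polynomial.C ((n:ℚ)+1) * Pg n (c+1) := by
      rw [Polynomial.derivative_pow]
      simp only [Polynomial.derivative_add, Polynomial.derivative_X, Polynomial.derivative_C,
        add_zero, mul_one, Nat.add_sub_cancel]
      rw [ih (c+1)]
      have : c + ((n:ℚ)+1) + 1 = (c+1) + (n:ℚ) + 1 := by ring
      rw [this]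
      push_cast
      ring
    have hdiff : Polynomial.derivative
        (Pg (n+1) c - (Polynomial.X + Polynomial.C (c + ((n:ℚ)+1) + 1))^(n+1)) = 0 := by
      rw [map_sub, hder, hderR, sub_self]
    have hC := Polynomial.eq_C_of_natDegree_eq_zero
      (Polynomial.natDegree_eq_zero_of_derivative_eq_zero hdiff)
    set y₀ : ℚ := -(c + (n:ℚ) + 2) with hy₀
    have hevalL : Polynomial.eval y₀ (Pg (n+1) c) = 0 := by
      unfold Pg
      rw [Polynomial.eval_finset_sum]
      have hterm : ∀ k ∈ range (n+1+1),
          Polynomial.eval y₀ (Polynomial.C (((n+1).choose k : ℚ) * ((k:ℚ)+1)^(k-1)) *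
            (Polynomial.X + Polynomial.C (c + ((n+1-k : ℕ) : ℚ)))^(n+1-k))
          = (-1:ℚ)^(n+1) * ((-1:ℚ)^k * (((n+1).choose k : ℕ):ℚ) * ((k:ℚ)+1)^n) := by
        intro k hk
        have hkn : k ≤ n + 1 := by simp at hk; omega
        simp only [Polynomial.eval_mul, Polynomial.eval_pow, Polynomial.eval_add,
          Polynomial.eval_X, Polynomial.eval_C]
        have hcs : ((n+1-k : ℕ):ℚ) = ((n:ℚ)+1) - (k:ℚ) := by
          rw [Nat.cast_sub hkn]; push_cast; ring
        have hbase : y₀ + (c + ((n+1-k : ℕ):ℚ)) = -((k:ℚ)+1) := by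
          rw [hy₀, hcs]; ring
        rw [hbase, neg_pow]
        have hsign0 : (-1:ℚ)^(n+1-k) * (-1:ℚ)^k = (-1:ℚ)^(n+1) := by
          rw [← pow_add]; congr 1; omega
        have hk2 : ((-1:ℚ)^k)*((-1:ℚ)^k) = 1 := by
          rw [← pow_add, ← two_mul, pow_mul]; norm_num
        have hsign : (-1:ℚ)^(n+1-k) = (-1:ℚ)^(n+1) * (-1:ℚ)^k := by
          calc (-1:ℚ)^(n+1-k) = ((-1:ℚ)^(n+1-k) * (-1:ℚ)^k) * (-1:ℚ)^k := by
                rw [mul_assoc, hk2, mul_one]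
            _ = (-1:ℚ)^(n+1) * (-1:ℚ)^k := by rw [hsign0]
        rw [hsign]
        have hpows := pow_combine n k hkn
        linear_combination ((-1:ℚ)^(n+1) * (-1:ℚ)^k * (((n+1).choose k : ℕ):ℚ)) * hpows
      rw [Finset.sum_congr rfl hterm, ← Finset.mul_sum]
      rw [shift_vanish (n+1) n (by omega)]
      ring
    have hevalR : Polynomial.eval y₀ ((Polynomial.X + Polynomial.C (c + ((n:ℚ)+1) + 1))^(n+1)) = 0 := by
      simp only [Polynomial.eval_pow, Polynomial.eval_add, Polynomial.eval_X, Polynomial.eval_C, hy₀]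
      rw [show -(c + (n:ℚ) + 2) + (c + ((n:ℚ)+1) + 1) = 0 by ring]
      simp
    have hzero : Pg (n+1) c - (Polynomial.X + Polynomial.C (c + ((n:ℚ)+1) + 1))^(n+1) = 0 := by
      rw [hC]
      have h5 := congrArg (Polynomial.eval y₀) hC
      rw [Polynomial.eval_sub, hevalL, hevalR, Polynomial.eval_C] at h5
      rw [← h5]
      norm_num
    have hfin := sub_eq_zero.mp hzero
    rw [hfin]
    have : c + ((n:ℚ)+1) + 1 = c + ((n+1:ℕ):ℚ) + 1 := by push_cast; ring
    rw [this]



lemma abel1 (n : ℕ) :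
    ∑ k ∈ range (n+1), (n.choose k : ℚ) * ((k:ℚ)+1)^(k-1) * ((n-k : ℕ):ℚ)^(n-k)
      = ((n:ℚ)+1)^n := by
  have h := congrArg (Polynomial.eval 0) (Pg_eq n 0)
  rw [Pg] at h
  rw [Polynomial.eval_finset_sum] at h
  simp only [Polynomial.eval_mul, Polynomial.eval_pow, Polynomial.eval_add,
    Polynomial.eval_X, Polynomial.eval_C, zero_add] at h
  exact h

lemma key_s6 (m : ℕ) :
    ∑ j ∈ range (m+1), ((j:ℚ)+1)^j/(Nat.factorial (j+1)) * (((m-j:ℕ):ℚ)^(m-j)/(Nat.factorial (m-j)))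
      = ((m:ℚ)+1)^m / (Nat.factorial m) := by
  have hterm : ∀ j ∈ range (m+1),
      ((j:ℚ)+1)^j/(Nat.factorial (j+1)) * (((m-j:ℕ):ℚ)^(m-j)/(Nat.factorial (m-j)))
        = ((m.choose j : ℚ) * ((j:ℚ)+1)^(j-1) * ((m-j : ℕ):ℚ)^(m-j)) / (Nat.factorial m) := by
    intro j hj
    have hjm : j ≤ m := by simp at hj; omega
    have hch : (m.choose j : ℚ) = (Nat.factorial m : ℚ) / (Nat.factorial j * Nat.factorial (m-j)) :=
      Nat.cast_choose ℚ hjm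
    have hfs : ((Nat.factorial (j+1) : ℕ) : ℚ) = ((j:ℚ)+1) * (Nat.factorial j : ℚ) := by
      rw [Nat.factorial_succ]; push_cast; ring
    have hpw : ((j:ℚ)+1)^j = ((j:ℚ)+1)^(j-1) * ((j:ℚ)+1) := by
      rcases j with _ | i
      · norm_num
      · rw [← pow_succ]
        congr 1
    have h1 : (Nat.factorial j : ℚ) ≠ 0 := by positivity
    have h2 : (Nat.factorial (m-j) : ℚ) ≠ 0 := by positivity
    have h3 : (Nat.factorial m : ℚ) ≠ 0 := by positivity
    have h4 : ((j:ℚ)+1) ≠ 0 := by positivity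
    rw [hch, hfs, hpw]
    field_simp
  rw [Finset.sum_congr rfl hterm, ← Finset.sum_div, abel1 m]


end TreeAux

/-- For the tree function `T = Σ_{n≥1} n^{n−1} X^n / n!` in `ℚ⟦X⟧`, we have
`(1 − T) · Σ_{n≥0} (n^n/n!) X^n = 1`, with the convention `0^0 = 1`. -/
theorem treeFun_inv (T : PowerSeries ℚ)
    (hT : T = PowerSeries.mk fun n => if n = 0 then 0 else (n : ℚ) ^ (n - 1) / n !) :
    (1 - T) * PowerSeries.mk (fun n => (n : ℚ) ^ n / n !) = 1 := by
  subst hT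
  ext n
  rw [PowerSeries.coeff_mul, Finset.Nat.sum_antidiagonal_eq_sum_range_succ_mk]
  simp only [map_sub, PowerSeries.coeff_one, PowerSeries.coeff_mk]
  rcases n with _ | m
  · norm_num
  · rw [Finset.sum_range_succ']
    simp only [Nat.succ_ne_zero, if_false, if_true, Nat.add_sub_cancel, Nat.sub_zero,
      reduceIte, zero_sub, sub_zero, one_mul]
    have hterm : ∀ k ∈ Finset.range (m+1),
        (-(((k+1:ℕ):ℚ) ^ k / ((k+1)! : ℕ))) * (((m+1-(k+1):ℕ):ℚ) ^ (m+1-(k+1)) / ((m+1-(k+1))! : ℕ))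
          = -( ((k:ℚ)+1)^k/(Nat.factorial (k+1)) * (((m-k:ℕ):ℚ)^(m-k)/(Nat.factorial (m-k))) ) := by
      intro k hk
      have hs : m+1-(k+1) = m - k := by omega
      rw [hs]
      push_cast
      ring
    rw [Finset.sum_congr rfl hterm, Finset.sum_neg_distrib, key_s6 m]
    have hfin : ((m+1:ℕ):ℚ)^(m+1)/((m+1)! : ℕ) = ((m:ℚ)+1)^m / (Nat.factorial m) := by
      have h3 : (Nat.factorial m : ℚ) ≠ 0 := by positivity
      have hfs : ((Nat.factorial (m+1) : ℕ) : ℚ) = ((m:ℚ)+1) * (Nat.factorial m : ℚ) := by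
        rw [Nat.factorial_succ]; push_cast; ring
      rw [hfs]
      push_cast
      rw [pow_succ]
      field_simp
    rw [hfin]
    ring
end

section
/- Let T be the formal power series over ℚ given by T = Σ_{n≥1} n^{n−1} X^n / n! (the tree function). Then X · T′ · (1 − T) = T in ℚ⟦X⟧, where T′ denotes the formal derivative of T; equivalently, X T′ = T/(1 − T). -/
open Nat PowerSeries

open Finset in

lemma alt_choose_sum : ∀ n : ℕ, ∀ m : ℕ, m < n →
    ∑ k ∈ range (n+1), (-1 : ℚ)^k * (n.choose k) * (k : ℚ)^m = 0 := by
  intro n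
  induction n with
  | zero => intro m hm; omega
  | succ n ih =>
    intro m hm
    rcases Nat.eq_zero_or_pos m with rfl | hmpos
    · have h := Int.alternating_sum_range_choose_of_ne (n := n+1) (by omega)
      have : ((∑ i ∈ range (n+2), (-1 : ℤ)^i * ((n+1).choose i) : ℤ) : ℚ) = 0 := by
        rw [h]; simp
      push_cast at this
      simpa using this
    · have hm0 : m ≠ 0 := by omega
      set f : ℕ → ℚ := fun i => (-1:ℚ)^i * (n.choose i : ℚ) with hf
      have h1 : ∑ k ∈ range (n+2), (-1:ℚ)^k * ((n+1).choose k) * (k:ℚ)^m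
          = ∑ i ∈ range (n+1), (-1:ℚ)^(i+1) * (((n+1).choose (i+1) : ℕ) : ℚ) * (((i:ℕ):ℚ)+1)^m := by
        rw [Finset.sum_range_succ'
          (fun k => (-1:ℚ)^k * ((n+1).choose k : ℚ) * (k:ℚ)^m) (n+1)]
        simp [zero_pow hm0]
      have h3 : ∑ i ∈ range (n+1), (-1:ℚ)^(i+1) * (n.choose (i+1) : ℚ) * (((i:ℕ):ℚ)+1)^m
          = ∑ k ∈ range (n+1), f k * (k:ℚ)^m := by
        have e1 := Finset.sum_range_succ' (fun k => f k * (k:ℚ)^m) (n+1)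
        have e2 := Finset.sum_range_succ (fun k => f k * (k:ℚ)^m) (n+1)
        have g0 : f 0 * ((0:ℕ):ℚ)^m = 0 := by simp [hf, zero_pow hm0]
        have gtop : f (n+1) * ((n+1:ℕ):ℚ)^m = 0 := by
          simp [hf, Nat.choose_succ_self]
        rw [e2, gtop, add_zero, g0, add_zero] at e1
        rw [e1]
        apply Finset.sum_congr rfl
        intro i _
        simp only [hf]
        push_cast
        ring
      have h4 : ∑ k ∈ range (n+2), (-1:ℚ)^k * ((n+1).choose k) * (k:ℚ)^m
          = ∑ i ∈ range (n+1), f i * ((i:ℚ)^m - ((i:ℚ)+1)^m) := by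
        rw [h1]
        rw [show (∑ i ∈ range (n+1), f i * ((i:ℚ)^m - ((i:ℚ)+1)^m))
            = ∑ i ∈ range (n+1), (f i * (i:ℚ)^m - f i * ((i:ℚ)+1)^m) from
          Finset.sum_congr rfl (fun i _ => by ring)]
        rw [Finset.sum_sub_distrib, ← h3]
        rw [show (∑ i ∈ range (n+1), (-1:ℚ)^(i+1) * (((n+1).choose (i+1) : ℕ):ℚ) * (((i:ℕ):ℚ)+1)^m)
            = ∑ i ∈ range (n+1), ((-1:ℚ)^(i+1) * (n.choose (i+1) : ℚ) * (((i:ℕ):ℚ)+1)^m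
              - f i * (((i:ℕ):ℚ)+1)^m) from
          Finset.sum_congr rfl (fun i _ => by
            rw [Nat.choose_succ_succ]
            simp only [hf]
            push_cast
            try ring)]
        rw [Finset.sum_sub_distrib]
      have hb : ∀ i : ℕ, (i:ℚ)^m - ((i:ℚ)+1)^m = -∑ j ∈ range m, ((i:ℚ)^j * (m.choose j)) := by
        intro i
        have := add_pow (i:ℚ) 1 m
        simp only [one_pow, mul_one] at this
        rw [this, Finset.sum_range_succ, Nat.choose_self]
        push_cast
        ring
      rw [h4]
      have hterm : ∀ i ∈ range (n+1), f i * ((i:ℚ)^m - ((i:ℚ)+1)^m)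
          = ∑ j ∈ range m, -((-1:ℚ)^i * (n.choose i) * (i:ℚ)^j * (m.choose j)) := by
        intro i _
        rw [hb i, mul_neg, Finset.mul_sum, ← Finset.sum_neg_distrib]
        apply Finset.sum_congr rfl
        intro j _
        simp only [hf]
        ring
      rw [Finset.sum_congr rfl hterm, Finset.sum_comm]
      have h6 : ∀ j ∈ range m,
          (∑ i ∈ range (n+1), -((-1:ℚ)^i * (n.choose i) * (i:ℚ)^j * (m.choose j))) = 0 := by
        intro j hj
        have hj' : j < n := by simp only [Finset.mem_range] at hj; omega
        rw [Finset.sum_neg_distrib, ← Finset.sum_mul, ih j hj']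
        ring
      rw [Finset.sum_congr rfl h6]
      simp

noncomputable def Pw (n : ℕ) : Polynomial ℚ :=
  ∑ i ∈ Finset.range n,
    Polynomial.C ((n.choose (i+1) : ℚ) * ((i:ℚ)+1)^i)
      * (Polynomial.X + Polynomial.C ((n - (i+1) : ℕ) : ℚ))^(n-(i+1))

lemma Pw_deriv (n : ℕ) : Polynomial.derivative (Pw (n+1))
    = Polynomial.C ((n:ℚ)+1) * ((Pw n).comp (Polynomial.X + Polynomial.C 1)) := by
  rw [Pw, Pw, map_sum, Polynomial.sum_comp]
  rw [Finset.sum_range_succ]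
  have htop : Polynomial.derivative
      (Polynomial.C (((n+1).choose (n+1) : ℚ) * ((n:ℚ)+1)^n)
        * (Polynomial.X + Polynomial.C ((n+1 - (n+1) : ℕ) : ℚ))^(n+1-(n+1))) = 0 := by
    rw [Polynomial.derivative_C_mul]
    simp
  rw [htop, add_zero, Finset.mul_sum]
  apply Finset.sum_congr rfl
  intro i hi
  have hi' : i < n := Finset.mem_range.mp hi
  rw [Polynomial.derivative_C_mul, Polynomial.derivative_pow, Polynomial.derivative_add,
    Polynomial.derivative_X, Polynomial.derivative_C, add_zero, mul_one]
  rw [Polynomial.mul_comp, Polynomial.C_comp, Polynomial.pow_comp, Polynomial.add_comp,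
    Polynomial.X_comp, Polynomial.C_comp]
  rw [show n + 1 - (i+1) - 1 = n - (i+1) from by omega]
  rw [show n + 1 - (i+1) = n - i from by omega]
  rw [show Polynomial.X + Polynomial.C (1:ℚ) + Polynomial.C ((n - (i+1) : ℕ) : ℚ)
      = Polynomial.X + Polynomial.C ((n - i : ℕ) : ℚ) from by
    rw [add_assoc, ← Polynomial.C_add]
    congr 2
    have : (n - i : ℕ) = (n - (i+1) : ℕ) + 1 := by omega
    rw [this]; push_cast; ring]
  have hsc : (((n+1).choose (i+1) : ℚ) * ((i:ℚ)+1)^i) * ((n - i : ℕ) : ℚ)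
      = ((n:ℚ)+1) * ((n.choose (i+1) : ℚ) * ((i:ℚ)+1)^i) := by
    have h := Nat.choose_mul_succ_eq n (i+1)
    have h' : ((n.choose (i+1) * (n+1) : ℕ) : ℚ)
        = (((n+1).choose (i+1) * (n + 1 - (i+1)) : ℕ) : ℚ) := by rw [h]
    rw [show n + 1 - (i+1) = n - i from by omega] at h'
    push_cast [Nat.cast_sub (by omega : i ≤ n)] at h' ⊢
    linear_combination (-((i:ℚ)+1)^i) * h'
  rw [← mul_assoc, ← Polynomial.C_mul, hsc, Polynomial.C_mul, mul_assoc]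

lemma Pw_eq (n : ℕ) (hn : 1 ≤ n) :
    Pw n = Polynomial.C (n:ℚ) * (Polynomial.X + Polynomial.C (n:ℚ))^(n-1) := by
  induction n, hn using Nat.le_induction with
  | base => simp [Pw]
  | succ n hn ih =>
    set q : Polynomial ℚ :=
      Polynomial.C ((n+1 : ℕ):ℚ) * (Polynomial.X + Polynomial.C ((n+1 : ℕ):ℚ))^n with hq
    have hd : Polynomial.derivative (Pw (n+1) - q) = 0 := by
      rw [map_sub, Pw_deriv, ih, hq]
      rw [Polynomial.derivative_C_mul, Polynomial.derivative_pow, Polynomial.derivative_add,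
        Polynomial.derivative_X, Polynomial.derivative_C, add_zero, mul_one]
      rw [Polynomial.mul_comp, Polynomial.C_comp, Polynomial.pow_comp, Polynomial.add_comp,
        Polynomial.X_comp, Polynomial.C_comp]
      rw [show Polynomial.X + Polynomial.C (1:ℚ) + Polynomial.C ((n:ℕ):ℚ)
          = Polynomial.X + Polynomial.C ((n+1 : ℕ):ℚ) from by
        rw [add_assoc, ← Polynomial.C_add]; congr 2; push_cast; ring]
      rw [sub_eq_zero, show ((n+1:ℕ):ℚ) = (n:ℚ)+1 from by push_cast; ring]
    have hdeg := Polynomial.natDegree_eq_zero_of_derivative_eq_zero hd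
    have hC := Polynomial.eq_C_of_natDegree_eq_zero hdeg
    have hfd : ∑ i ∈ Finset.range (n+1),
        (-1:ℚ)^(i+1) * (((n+1).choose (i+1) : ℕ):ℚ) * (((i+1:ℕ)):ℚ)^n = 0 := by
      have h := alt_choose_sum (n+1) n (by omega)
      rw [Finset.sum_range_succ'] at h
      have f0 : (-1:ℚ)^0 * ((n+1).choose 0 : ℚ) * ((0:ℕ):ℚ)^n = 0 := by
        simp [zero_pow (by omega : n ≠ 0)]
      rw [f0, add_zero] at h
      exact h
    set x₀ : ℚ := -((n+1 : ℕ):ℚ) with hx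
    have heval1 : Polynomial.eval x₀ (Pw (n+1)) = 0 := by
      rw [Pw, Polynomial.eval_finset_sum]
      have hterm : ∀ i ∈ Finset.range (n+1),
          Polynomial.eval x₀ (Polynomial.C (((n+1).choose (i+1) : ℚ) * ((i:ℚ)+1)^i)
            * (Polynomial.X + Polynomial.C ((n+1 - (i+1) : ℕ) : ℚ))^(n+1-(i+1)))
          = (-(-1:ℚ)^n) * ((-1:ℚ)^(i+1) * (((n+1).choose (i+1) : ℕ):ℚ) * (((i+1:ℕ)):ℚ)^n) := by
        intro i hi
        have hi' : i < n+1 := Finset.mem_range.mp hi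
        rw [Polynomial.eval_mul, Polynomial.eval_pow, Polynomial.eval_add, Polynomial.eval_X,
          Polynomial.eval_C, Polynomial.eval_C]
        rw [show n + 1 - (i+1) = n - i from by omega]
        have hx0 : x₀ + ((n - i : ℕ) : ℚ) = -((i:ℚ)+1) := by
          rw [hx]
          push_cast [Nat.cast_sub (by omega : i ≤ n)]
          ring
        rw [hx0]
        rw [show (-((i:ℚ)+1))^(n-i) = (-1)^(n-i) * ((i:ℚ)+1)^(n-i) from by
          rw [neg_pow]]
        have hsign : ((-1:ℚ))^(n-i) = (-1)^n * (-1)^i := by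
          have h2 : ((-1:ℚ))^(n-i) = (-1)^((n-i)+2*i) := by
            rw [pow_add, pow_mul]; norm_num
          rw [h2, show (n-i)+2*i = n+i from by omega, pow_add]
        have hpow : ((i:ℚ)+1)^i * ((i:ℚ)+1)^(n-i) = ((i:ℚ)+1)^n := by
          rw [← pow_add, show i + (n-i) = n from by omega]
        rw [hsign]
        push_cast
        calc (((n+1).choose (i+1) : ℚ) * ((i:ℚ)+1)^i) * ((-1:ℚ)^n * (-1)^i * ((i:ℚ)+1)^(n-i))
            = ((-1:ℚ)^n * (-1)^i) * (((n+1).choose (i+1) : ℚ)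
                * (((i:ℚ)+1)^i * ((i:ℚ)+1)^(n-i))) := by ring
          _ = (-(-1:ℚ)^n) * ((-1:ℚ)^(i+1) * (((n+1).choose (i+1):ℕ):ℚ) * ((i:ℚ)+1)^n) := by
              rw [hpow]; push_cast; ring
      rw [Finset.sum_congr rfl hterm, ← Finset.mul_sum, hfd, mul_zero]
    have heval2 : Polynomial.eval x₀ q = 0 := by
      rw [hq, Polynomial.eval_mul, Polynomial.eval_pow, Polynomial.eval_add, Polynomial.eval_X,
        Polynomial.eval_C, hx]
      rw [show -((n+1 : ℕ):ℚ) + ((n+1 : ℕ):ℚ) = 0 from by ring]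
      rw [zero_pow (by omega : n ≠ 0), mul_zero]
    have hc0 : (Pw (n+1) - q).coeff 0 = 0 := by
      have := congrArg (Polynomial.eval x₀) hC
      rw [Polynomial.eval_sub, heval1, heval2, Polynomial.eval_C] at this
      linarith [this]
    rw [hc0] at hC
    have : Pw (n+1) - q = 0 := by rw [hC]; simp
    have := sub_eq_zero.mp this
    rw [this, hq]
    norm_num

lemma star (n : ℕ) (hn : 1 ≤ n) :
    ∑ i ∈ Finset.range n,
      ((n.choose (i+1) : ℚ) * ((i:ℚ)+1)^i * ((n-(i+1) : ℕ):ℚ)^(n-(i+1))) = (n:ℚ)^n := by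
  have h := congrArg (Polynomial.eval (0:ℚ)) (Pw_eq n hn)
  rw [Pw, Polynomial.eval_finset_sum] at h
  simp only [Polynomial.eval_mul, Polynomial.eval_pow, Polynomial.eval_add, Polynomial.eval_X,
    Polynomial.eval_C, zero_add] at h
  rw [h, show (n:ℚ)^n = (n:ℚ)^((n-1)+1) from by congr 1; omega, pow_succ]
  ring

lemma starC (n : ℕ) (hn : 1 ≤ n) :
    ∑ i ∈ Finset.range (n-1),
      ((n.choose (i+1) : ℚ) * (((i+1 : ℕ)):ℚ)^(i+1) * ((n-(i+1) : ℕ):ℚ)^(n-(i+1)-1))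
    = (n:ℚ)^n - (n:ℚ)^(n-1) := by
  have hs := star n hn
  rw [show n = (n-1)+1 from by omega] at hs
  rw [Finset.sum_range_succ] at hs
  rw [show (n-1)+1 = n from by omega] at hs
  have htop : (n.choose n : ℚ) * (((n-1:ℕ):ℚ)+1)^(n-1) * ((n-n : ℕ):ℚ)^(n-n)
      = (n:ℚ)^(n-1) := by
    rw [Nat.sub_self, Nat.choose_self]
    push_cast [Nat.cast_sub (by omega : 1 ≤ n)]
    ring
  rw [htop] at hs
  have hrefl := Finset.sum_range_reflect
    (fun i => (n.choose (i+1) : ℚ) * ((i:ℚ)+1)^i * ((n-(i+1) : ℕ):ℚ)^(n-(i+1))) (n-1)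
  rw [← hrefl] at hs
  have hs' : ∑ i ∈ Finset.range (n-1),
      ((n.choose (i+1) : ℚ) * (((i+1 : ℕ)):ℚ)^(i+1) * ((n-(i+1) : ℕ):ℚ)^(n-(i+1)-1))
      = ∑ j ∈ Finset.range (n-1),
      ((n.choose (n-1-1-j+1) : ℚ) * (((n-1-1-j:ℕ):ℚ)+1)^(n-1-1-j) * ((n-(n-1-1-j+1) : ℕ):ℚ)^(n-(n-1-1-j+1))) := by
    apply Finset.sum_congr rfl
    intro j hj
    have hj' : j < n-1 := Finset.mem_range.mp hj
    have e1 : n-1-1-j+1 = n-1-j := by omega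
    have e2 : n-(n-1-j) = j+1 := by omega
    rw [e1, e2]
    have e3 : n.choose (n-1-j) = n.choose (j+1) := by
      rw [← Nat.choose_symm (by omega : j+1 ≤ n)]
      congr 1
      omega
    rw [e3]
    have e4 : ((n-1-1-j:ℕ):ℚ)+1 = ((n-(j+1):ℕ):ℚ) := by
      have : (n-(j+1) : ℕ) = (n-1-1-j : ℕ) + 1 := by omega
      rw [this]
      push_cast
      ring
    rw [e4, show n-1-1-j = n-(j+1)-1 from by omega]
    ring
  rw [hs']
  linarith [hs]


/-- For the tree function `T = Σ_{n≥1} n^{n−1} X^n / n!` in `ℚ⟦X⟧`, we have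
`X · T′ · (1 − T) = T`, where `T′` is the formal derivative of `T`. -/
theorem treeFun_deriv (T : PowerSeries ℚ)
    (hT : T = PowerSeries.mk fun n => if n = 0 then 0 else (n : ℚ) ^ (n - 1) / n !) :
    PowerSeries.X * (PowerSeries.derivative ℚ T) * (1 - T) = T := by
  subst hT
  set t : ℕ → ℚ := fun n => if n = 0 then 0 else (n : ℚ) ^ (n - 1) / n ! with ht
  set a : ℕ → ℚ := fun n => if n = 0 then 0 else (n : ℚ) ^ n / n ! with ha
  have hXd : PowerSeries.X * (PowerSeries.derivative ℚ (PowerSeries.mk t)) = PowerSeries.mk a := by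
    ext n
    cases n with
    | zero => rw [coeff_zero_X_mul, coeff_mk]; simp [ha]
    | succ m =>
      rw [coeff_succ_X_mul, PowerSeries.coeff_derivative, coeff_mk, coeff_mk]
      simp only [ht, ha, Nat.succ_ne_zero, if_false, Nat.add_sub_cancel]
      push_cast
      rw [div_mul_eq_mul_div, ← pow_succ]
  rw [hXd, mul_sub, mul_one]
  ext n
  rw [map_sub, PowerSeries.coeff_mul, coeff_mk, coeff_mk,
    Finset.Nat.sum_antidiagonal_eq_sum_range_succ_mk]
  simp only [coeff_mk]
  cases n with
  | zero => simp [ha, ht]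
  | succ m =>
    set n := m + 1 with hn
    have hconv : ∑ i ∈ Finset.range (n+1), a i * t (n - i)
        = ((n:ℚ)^n - (n:ℚ)^(n-1)) / n ! := by
      rw [Finset.sum_range_succ, Finset.sum_range_succ']
      have h1 : a n * t (n - n) = 0 := by simp [ht]
      have h2 : a 0 * t (n - 0) = 0 := by simp [ha]
      rw [h1, h2, add_zero, add_zero]
      have hper : ∀ i ∈ Finset.range m, a (i+1) * t (n - (i+1))
          = ((n.choose (i+1) : ℚ) * (((i+1 : ℕ)):ℚ)^(i+1) * ((n-(i+1) : ℕ):ℚ)^(n-(i+1)-1)) / n ! := by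
        intro i hi
        have hi' : i < m := Finset.mem_range.mp hi
        have hne1 : (i+1 : ℕ) ≠ 0 := by omega
        have hne2 : (n - (i+1) : ℕ) ≠ 0 := by omega
        simp only [ht, ha, hne1, hne2, if_false]
        have hcf : ((n.choose (i+1) * (i+1)! * (n-(i+1))! : ℕ) : ℚ) = ((n ! : ℕ) : ℚ) := by
          rw [Nat.choose_mul_factorial_mul_factorial (by omega : i+1 ≤ n)]
        push_cast at hcf
        have f1 : ((i+1)! : ℚ) ≠ 0 := by positivity
        have f2 : ((n-(i+1))! : ℚ) ≠ 0 := by positivity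
        have f3 : ((n)! : ℚ) ≠ 0 := by positivity
        field_simp
        push_cast
        linear_combination (-1 : ℚ) * hcf
      rw [Finset.sum_congr rfl hper, ← Finset.sum_div]
      rw [show m = n - 1 from by omega]
      rw [starC n (by omega)]
    have hgoal : a n - (∑ i ∈ Finset.range (n+1), a i * t (n - i)) = t n := by
      rw [hconv]
      have han : a n = (n:ℚ)^n / n ! := by simp [ha, hn]
      have htn : t n = (n:ℚ)^(n-1) / n ! := by simp [ht, hn]
      rw [han, htn, div_sub_div_same]
      congr 1
      ring
    exact hgoal
end
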